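/- arXiv:math-ph/0604064 — 5 statements merged into one kernel-verified Lean document; each statement's English description precedes it below -/
import Mathlib

section
/- Let n, m, k be natural numbers with 1 ≤ k ≤ m, let U ⊆ ℝ^{1+n} be a bounded open set, let L : ℝ^{1+n} × ℝ^m × ℝ^{m(1+n)} → ℝ be smooth (a first-order Lagrangian density), let φ : ℝ^{1+n} → ℝ^m be smooth, and let A^α_a : ℝ^{1+n} × ℝ^m × ℝ^{m(1+n)} → ℝ (α = 1,…,k, a = 1,…,m) be smooth functions such that the k × m matrix (A^α_a(x, φ(x), Dφ(x))) has rank k for every x ∈ U. Then the following are equivalent: (i) for every smooth V : ℝ^{1+n} → ℝ^m with compact support contained in U satisfying Σ_a A^α_a(x, φ(x), Dφ(x)) V^a(x) = 0 for all x ∈ U and α = 1,…,k, one has ∫_U Σ_a EL_a[φ](x) V^a(x) dx = 0; (ii) there exist smooth functions λ_1,…,λ_k : U → ℝ such that EL_a[φ](x) = Σ_α λ_α(x) A^α_a(x, φ(x), Dφ(x)) for all x ∈ U and a = 1,…,m. -/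
open MeasureTheory

/-- Partial derivative of a scalar function on `ℝ^N` along the `μ`-th coordinate. -/
noncomputable def pdCoord {N : ℕ} (f : (Fin N → ℝ) → ℝ) (μ : Fin N) (x : Fin N → ℝ) : ℝ :=
  fderiv ℝ f x (Pi.single μ 1)

/-- The matrix `Dφ` of first partial derivatives `∂φ^a/∂x^μ` of a field
`φ : ℝ^{1+n} → ℝ^m`. -/
noncomputable def jetD {n m : ℕ} (φ : (Fin (n + 1) → ℝ) → (Fin m → ℝ))
    (x : Fin (n + 1) → ℝ) : Fin m → Fin (n + 1) → ℝ :=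
  fun a μ => fderiv ℝ φ x (Pi.single μ 1) a

/-- Partial derivative `∂L/∂y^a` of a first-order Lagrangian density. -/
noncomputable def pdY {n m : ℕ}
    (L : (Fin (n + 1) → ℝ) → (Fin m → ℝ) → (Fin m → Fin (n + 1) → ℝ) → ℝ)
    (a : Fin m) (x : Fin (n + 1) → ℝ) (y : Fin m → ℝ) (z : Fin m → Fin (n + 1) → ℝ) : ℝ :=
  fderiv ℝ (fun y' => L x y' z) y (Pi.single a 1)

/-- Partial derivative `∂L/∂z^a_μ` of a first-order Lagrangian density. -/
noncomputable def pdZ {n m : ℕ}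
    (L : (Fin (n + 1) → ℝ) → (Fin m → ℝ) → (Fin m → Fin (n + 1) → ℝ) → ℝ)
    (a : Fin m) (μ : Fin (n + 1)) (x : Fin (n + 1) → ℝ) (y : Fin m → ℝ)
    (z : Fin m → Fin (n + 1) → ℝ) : ℝ :=
  fderiv ℝ (fun z' => L x y z') z (Pi.single a (Pi.single μ 1))

/-- The Euler–Lagrange expression
`EL_a[φ](x) = (∂L/∂y^a)(j¹φ(x)) − Σ_μ ∂/∂x^μ [(∂L/∂z^a_μ)(j¹φ(x))]`. -/
noncomputable def eulerLagrange {n m : ℕ}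
    (L : (Fin (n + 1) → ℝ) → (Fin m → ℝ) → (Fin m → Fin (n + 1) → ℝ) → ℝ)
    (φ : (Fin (n + 1) → ℝ) → (Fin m → ℝ)) (a : Fin m) (x : Fin (n + 1) → ℝ) : ℝ :=
  pdY L a x (φ x) (jetD φ x)
    - ∑ μ : Fin (n + 1), pdCoord (fun x' => pdZ L a μ x' (φ x') (jetD φ x')) μ x


-- fderiv applied to constant vector is smooth
lemma contDiff_fderiv_apply {E F : Type*} [NormedAddCommGroup E] [NormedSpace ℝ E]
    [NormedAddCommGroup F] [NormedSpace ℝ F] {f : E → F} (hf : ContDiff ℝ (⊤ : ℕ∞) f)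
    (v : E) : ContDiff ℝ (⊤ : ℕ∞) (fun x => fderiv ℝ f x v) :=
  (hf.fderiv_right (by exact_mod_cast le_top)).clm_apply contDiff_const

lemma contDiff_jetD {n m : ℕ} {φ : (Fin (n + 1) → ℝ) → (Fin m → ℝ)}
    (hφ : ContDiff ℝ (⊤ : ℕ∞) φ) : ContDiff ℝ (⊤ : ℕ∞) (jetD φ) := by
  apply contDiff_pi.2 fun a => contDiff_pi.2 fun μ => ?_
  exact (contDiff_apply ℝ ℝ a).comp (contDiff_fderiv_apply hφ (Pi.single μ 1))

lemma contDiff_pdCoord {N : ℕ} {f : (Fin N → ℝ) → ℝ} (hf : ContDiff ℝ (⊤ : ℕ∞) f)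
    (μ : Fin N) : ContDiff ℝ (⊤ : ℕ∞) (pdCoord f μ) :=
  contDiff_fderiv_apply hf _


section
variable {n m : ℕ}
  {L : (Fin (n + 1) → ℝ) → (Fin m → ℝ) → (Fin m → Fin (n + 1) → ℝ) → ℝ}

local notation "Xs" => (Fin (n + 1) → ℝ)
local notation "Ys" => (Fin m → ℝ)
local notation "Zs" => (Fin m → Fin (n + 1) → ℝ)

lemma pdY_eq (hL : ContDiff ℝ (⊤ : ℕ∞)
      (fun q : Xs × Ys × Zs => L q.1 q.2.1 q.2.2))
    (a : Fin m) (x : Xs) (y : Ys) (z : Zs) :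
    pdY L a x y z =
      fderiv ℝ (fun q : Xs × Ys × Zs => L q.1 q.2.1 q.2.2) (x, y, z)
        (0, Pi.single a 1, 0) := by
  set Lf := fun q : Xs × Ys × Zs => L q.1 q.2.1 q.2.2 with hLf
  have hg : HasFDerivAt (fun y' : Ys => ((x, y', z) : Xs × Ys × Zs))
      ((0 : Ys →L[ℝ] Xs).prod ((ContinuousLinearMap.id ℝ Ys).prod (0 : Ys →L[ℝ] Zs))) y :=
    HasFDerivAt.prodMk (hasFDerivAt_const x y) (HasFDerivAt.prodMk (hasFDerivAt_id y) (hasFDerivAt_const z y))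
  have hD : HasFDerivAt Lf (fderiv ℝ Lf (x, y, z)) (x, y, z) :=
    ((hL.differentiable (by simp)) (x, y, z)).hasFDerivAt
  have hcomp := hD.comp y hg
  simp only [Function.comp_def] at hcomp
  rw [pdY, show (fun y' : Ys => L x y' z) = fun y' : Ys => Lf (x, y', z) from rfl, hcomp.fderiv]
  simp

lemma pdZ_eq (hL : ContDiff ℝ (⊤ : ℕ∞)
      (fun q : Xs × Ys × Zs => L q.1 q.2.1 q.2.2))
    (a : Fin m) (μ : Fin (n + 1)) (x : Xs) (y : Ys) (z : Zs) :
    pdZ L a μ x y z =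
      fderiv ℝ (fun q : Xs × Ys × Zs => L q.1 q.2.1 q.2.2) (x, y, z)
        (0, 0, Pi.single a (Pi.single μ 1)) := by
  set Lf := fun q : Xs × Ys × Zs => L q.1 q.2.1 q.2.2 with hLf
  have hg : HasFDerivAt (fun z' : Zs => ((x, y, z') : Xs × Ys × Zs))
      ((0 : Zs →L[ℝ] Xs).prod ((0 : Zs →L[ℝ] Ys).prod (ContinuousLinearMap.id ℝ Zs))) z :=
    HasFDerivAt.prodMk (hasFDerivAt_const x z) (HasFDerivAt.prodMk (hasFDerivAt_const y z) (hasFDerivAt_id z))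
  have hD : HasFDerivAt Lf (fderiv ℝ Lf (x, y, z)) (x, y, z) :=
    ((hL.differentiable (by simp)) (x, y, z)).hasFDerivAt
  have hcomp := hD.comp z hg
  simp only [Function.comp_def] at hcomp
  rw [pdZ, show (fun z' : Zs => L x y z') = fun z' : Zs => Lf (x, y, z') from rfl, hcomp.fderiv]
  simp

lemma contDiff_jet {φ : Xs → Ys} (hφ : ContDiff ℝ (⊤ : ℕ∞) φ) :
    ContDiff ℝ (⊤ : ℕ∞) (fun x : Xs => ((x, φ x, jetD φ x) : Xs × Ys × Zs)) :=
  contDiff_id.prodMk (hφ.prodMk (contDiff_jetD hφ))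

lemma contDiff_pdY_jet (hL : ContDiff ℝ (⊤ : ℕ∞)
      (fun q : Xs × Ys × Zs => L q.1 q.2.1 q.2.2))
    {φ : Xs → Ys} (hφ : ContDiff ℝ (⊤ : ℕ∞) φ) (a : Fin m) :
    ContDiff ℝ (⊤ : ℕ∞) (fun x => pdY L a x (φ x) (jetD φ x)) := by
  have : (fun x => pdY L a x (φ x) (jetD φ x)) = fun x =>
      fderiv ℝ (fun q : Xs × Ys × Zs => L q.1 q.2.1 q.2.2) (x, φ x, jetD φ x)
        (0, Pi.single a 1, 0) := by
    funext x; exact pdY_eq hL a x (φ x) (jetD φ x)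
  rw [this]
  exact ((hL.fderiv_right (by exact_mod_cast le_top)).comp (contDiff_jet hφ)).clm_apply
    contDiff_const

lemma contDiff_pdZ_jet (hL : ContDiff ℝ (⊤ : ℕ∞)
      (fun q : Xs × Ys × Zs => L q.1 q.2.1 q.2.2))
    {φ : Xs → Ys} (hφ : ContDiff ℝ (⊤ : ℕ∞) φ) (a : Fin m) (μ : Fin (n + 1)) :
    ContDiff ℝ (⊤ : ℕ∞) (fun x => pdZ L a μ x (φ x) (jetD φ x)) := by
  have : (fun x => pdZ L a μ x (φ x) (jetD φ x)) = fun x =>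
      fderiv ℝ (fun q : Xs × Ys × Zs => L q.1 q.2.1 q.2.2) (x, φ x, jetD φ x)
        (0, 0, Pi.single a (Pi.single μ 1)) := by
    funext x; exact pdZ_eq hL a μ x (φ x) (jetD φ x)
  rw [this]
  exact ((hL.fderiv_right (by exact_mod_cast le_top)).comp (contDiff_jet hφ)).clm_apply
    contDiff_const

end


lemma contDiff_eulerLagrange {n m : ℕ}
    {L : (Fin (n + 1) → ℝ) → (Fin m → ℝ) → (Fin m → Fin (n + 1) → ℝ) → ℝ}
    (hL : ContDiff ℝ (⊤ : ℕ∞)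
      (fun q : (Fin (n + 1) → ℝ) × (Fin m → ℝ) × (Fin m → Fin (n + 1) → ℝ) =>
        L q.1 q.2.1 q.2.2))
    {φ : (Fin (n + 1) → ℝ) → (Fin m → ℝ)} (hφ : ContDiff ℝ (⊤ : ℕ∞) φ) (a : Fin m) :
    ContDiff ℝ (⊤ : ℕ∞) (eulerLagrange L φ a) := by
  unfold eulerLagrange
  exact (contDiff_pdY_jet hL hφ a).sub
    (ContDiff.sum fun μ _ => contDiff_pdCoord (contDiff_pdZ_jet hL hφ a μ) μ)

-- Finset product of ContDiffOn functions
lemma contDiffOn_finset_prod {E : Type*} [NormedAddCommGroup E] [NormedSpace ℝ E]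
    {ι : Type*} [DecidableEq ι] (s : Finset ι) {f : ι → E → ℝ} {S : Set E}
    (h : ∀ i ∈ s, ContDiffOn ℝ (⊤ : ℕ∞) (f i) S) :
    ContDiffOn ℝ (⊤ : ℕ∞) (fun x => ∏ i ∈ s, f i x) S := by
  induction s using Finset.induction with
  | empty => simpa using contDiffOn_const
  | insert _ _ hi ih =>
    rename_i a s
    simp only [Finset.prod_insert hi]
    exact (h a (Finset.mem_insert_self a s)).mul
      (ih fun i his => h i (Finset.mem_insert_of_mem his))

lemma contDiffOn_det {E : Type*} [NormedAddCommGroup E] [NormedSpace ℝ E]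
    {k : ℕ} {M : E → Matrix (Fin k) (Fin k) ℝ} {S : Set E}
    (h : ∀ i j, ContDiffOn ℝ (⊤ : ℕ∞) (fun x => M x i j) S) :
    ContDiffOn ℝ (⊤ : ℕ∞) (fun x => (M x).det) S := by
  simp only [Matrix.det_apply, Units.smul_def, zsmul_eq_mul]
  exact ContDiffOn.sum fun σ _ =>
    contDiffOn_const.mul (contDiffOn_finset_prod Finset.univ (fun i hi => h (σ i) i))

lemma contDiffOn_adjugate {E : Type*} [NormedAddCommGroup E] [NormedSpace ℝ E]
    {k : ℕ} {M : E → Matrix (Fin k) (Fin k) ℝ} {S : Set E}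
    (h : ∀ i j, ContDiffOn ℝ (⊤ : ℕ∞) (fun x => M x i j) S) (i j : Fin k) :
    ContDiffOn ℝ (⊤ : ℕ∞) (fun x => (M x).adjugate i j) S := by
  simp only [Matrix.adjugate_apply]
  apply contDiffOn_det
  intro i' j'
  rw [show (fun x => (M x).updateRow j (Pi.single i 1) i' j') =
      fun x => if i' = j then (Pi.single i 1 : Fin k → ℝ) j' else M x i' j' from
    funext fun x => Matrix.updateRow_apply]
  by_cases hij : i' = j <;> simp [hij] <;> [exact contDiffOn_const; exact h i' j']

open Matrix in
lemma isUnit_det_self_mul_transpose {k m : ℕ} (B : Matrix (Fin k) (Fin m) ℝ)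
    (h : B.rank = k) : IsUnit (B * Bᵀ).det := by
  have hG : (B * Bᵀ).rank = k := by rw [Matrix.rank_self_mul_transpose, h]
  have hrange : LinearMap.range (B * Bᵀ).mulVecLin = ⊤ := by
    apply Submodule.eq_top_of_finrank_eq
    rw [show Module.finrank ℝ ↥(LinearMap.range (B * Bᵀ).mulVecLin) = (B * Bᵀ).rank from rfl,
      hG]
    simp [Module.finrank_fin_fun]
  have hsurj : Function.Surjective (B * Bᵀ).mulVec := by
    intro v
    obtain ⟨u, hu⟩ := LinearMap.range_eq_top.mp hrange v
    exact ⟨u, hu⟩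
  exact (Matrix.isUnit_iff_isUnit_det _).mp (Matrix.mulVec_surjective_iff_isUnit.mp hsurj)

lemma contDiff_smul_extend {E F : Type*} [NormedAddCommGroup E] [NormedSpace ℝ E]
    [NormedAddCommGroup F] [NormedSpace ℝ F] {ρ : E → ℝ} {w : E → F} {U : Set E}
    (hU : IsOpen U) (hρ : ContDiff ℝ (⊤ : ℕ∞) ρ) (hw : ContDiffOn ℝ (⊤ : ℕ∞) w U)
    (hsupp : tsupport ρ ⊆ U) : ContDiff ℝ (⊤ : ℕ∞) (fun x => ρ x • w x) := by
  rw [contDiff_iff_contDiffAt]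
  intro x
  by_cases hx : x ∈ U
  · exact hρ.contDiffAt.smul (hw.contDiffAt (hU.mem_nhds hx))
  · have hx' : x ∉ tsupport ρ := fun hh => hx (hsupp hh)
    have heq : (fun x => ρ x • w x) =ᶠ[nhds x] (fun _ => (0 : F)) := by
      filter_upwards [(isClosed_tsupport ρ).isOpen_compl.mem_nhds hx'] with y hy
      simp [image_eq_zero_of_notMem_tsupport hy]
    exact (contDiffAt_const (c := (0 : F))).congr_of_eventuallyEq heq

lemma continuous_mul_extend {E : Type*} [TopologicalSpace E] {ρ : E → ℝ} {g : E → ℝ}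
    {U : Set E} (hU : IsOpen U) (hρ : Continuous ρ) (hg : ContinuousOn g U)
    (hsupp : tsupport ρ ⊆ U) : Continuous (fun x => ρ x * g x) := by
  rw [continuous_iff_continuousAt]
  intro x
  by_cases hx : x ∈ U
  · exact (hρ.continuousAt).mul ((hg.continuousAt (hU.mem_nhds hx)))
  · have hx' : x ∉ tsupport ρ := fun hh => hx (hsupp hh)
    have heq : (fun x => ρ x * g x) =ᶠ[nhds x] (fun _ => (0 : ℝ)) := by
      filter_upwards [(isClosed_tsupport ρ).isOpen_compl.mem_nhds hx'] with y hy
      simp [image_eq_zero_of_notMem_tsupport hy]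
    exact ContinuousAt.congr (continuousAt_const (y := (0:ℝ))) heq.symm


open Matrix in
/-- the nonholonomic Euler–Lagrange equations: stationarity of the action
under admissible variations (those annihilated by the reaction-force coefficients `A`)
is equivalent to the Euler–Lagrange expression being a combination of the reaction
forces with Lagrange multipliers. -/
theorem nonholonomic_euler_lagrange_equivalence
    (n m k : ℕ) (hk1 : 1 ≤ k) (hkm : k ≤ m)
    (U : Set (Fin (n + 1) → ℝ)) (hUopen : IsOpen U) (hUbdd : Bornology.IsBounded U)
    (L : (Fin (n + 1) → ℝ) → (Fin m → ℝ) → (Fin m → Fin (n + 1) → ℝ) → ℝ)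
    (hL : ContDiff ℝ (⊤ : ℕ∞)
      (fun q : (Fin (n + 1) → ℝ) × (Fin m → ℝ) × (Fin m → Fin (n + 1) → ℝ) =>
        L q.1 q.2.1 q.2.2))
    (φ : (Fin (n + 1) → ℝ) → (Fin m → ℝ)) (hφ : ContDiff ℝ (⊤ : ℕ∞) φ)
    (A : Fin k → Fin m →
      (Fin (n + 1) → ℝ) → (Fin m → ℝ) → (Fin m → Fin (n + 1) → ℝ) → ℝ)
    (hA : ∀ α a, ContDiff ℝ (⊤ : ℕ∞)
      (fun q : (Fin (n + 1) → ℝ) × (Fin m → ℝ) × (Fin m → Fin (n + 1) → ℝ) =>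
        A α a q.1 q.2.1 q.2.2))
    (hrank : ∀ x ∈ U,
      (Matrix.of fun α a => A α a x (φ x) (jetD φ x)).rank = k) :
    ((∀ V : (Fin (n + 1) → ℝ) → (Fin m → ℝ), ContDiff ℝ (⊤ : ℕ∞) V →
        HasCompactSupport V → tsupport V ⊆ U →
        (∀ x ∈ U, ∀ α, ∑ a, A α a x (φ x) (jetD φ x) * V x a = 0) →
        (∫ x in U, ∑ a, eulerLagrange L φ a x * V x a) = 0)
      ↔ (∃ lam : Fin k → (Fin (n + 1) → ℝ) → ℝ,
          (∀ α, ContDiffOn ℝ (⊤ : ℕ∞) (lam α) U) ∧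
          ∀ x ∈ U, ∀ a,
            eulerLagrange L φ a x = ∑ α, lam α x * A α a x (φ x) (jetD φ x))) := by
  classical
  constructor
  · -- (i) → (ii)
    intro hyp
    set B : (Fin (n + 1) → ℝ) → Matrix (Fin k) (Fin m) ℝ :=
      fun x => Matrix.of fun α a => A α a x (φ x) (jetD φ x) with hBdef
    have hBsm : ∀ α a, ContDiff ℝ (⊤ : ℕ∞) (fun x => B x α a) :=
      fun α a => (hA α a).comp (contDiff_jet hφ)
    set ELv : (Fin (n + 1) → ℝ) → (Fin m → ℝ) :=
      fun x a => eulerLagrange L φ a x with hELdef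
    have hELsm : ContDiff ℝ (⊤ : ℕ∞) ELv :=
      contDiff_pi.2 fun a => contDiff_eulerLagrange hL hφ a
    set G : (Fin (n + 1) → ℝ) → Matrix (Fin k) (Fin k) ℝ :=
      fun x => B x * (B x)ᵀ with hGdef
    have hGsm : ∀ i j, ContDiff ℝ (⊤ : ℕ∞) (fun x => G x i j) := by
      intro i j
      simp only [hGdef, Matrix.mul_apply, Matrix.transpose_apply]
      exact ContDiff.sum fun a _ => (hBsm i a).mul (hBsm j a)
    have hGdet : ∀ x ∈ U, IsUnit (G x).det := fun x hx =>
      isUnit_det_self_mul_transpose (B x) (hrank x hx)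
    set Gi : (Fin (n + 1) → ℝ) → Matrix (Fin k) (Fin k) ℝ :=
      fun x => ((G x).det)⁻¹ • (G x).adjugate with hGidef
    have hGiEq : ∀ x, Gi x = (G x)⁻¹ := by
      intro x
      rw [Matrix.inv_def, Ring.inverse_eq_inv']
    have hGGi : ∀ x ∈ U, G x * Gi x = 1 := fun x hx => by
      rw [hGiEq x]; exact Matrix.mul_nonsing_inv _ (hGdet x hx)
    have hGism : ∀ i j, ContDiffOn ℝ (⊤ : ℕ∞) (fun x => Gi x i j) U := by
      intro i j
      simp only [hGidef, Matrix.smul_apply, smul_eq_mul]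
      exact (((contDiffOn_det (fun i j => (hGsm i j).contDiffOn)).inv
        (fun x hx => (hGdet x hx).ne_zero)).mul
        (contDiffOn_adjugate (fun i j => (hGsm i j).contDiffOn) i j))
    set P : (Fin (n + 1) → ℝ) → Matrix (Fin m) (Fin m) ℝ :=
      fun x => 1 - (B x)ᵀ * Gi x * B x with hPdef
    have hBP : ∀ x ∈ U, B x * P x = 0 := by
      intro x hx
      simp only [hPdef, Matrix.mul_sub, Matrix.mul_one, ← Matrix.mul_assoc]
      rw [show B x * (B x)ᵀ * Gi x * B x = G x * Gi x * B x from rfl,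
        hGGi x hx, Matrix.one_mul, sub_self]
    have hPsm : ∀ a b, ContDiffOn ℝ (⊤ : ℕ∞) (fun x => P x a b) U := by
      intro a b
      simp only [hPdef, Matrix.sub_apply, Matrix.mul_apply, Matrix.transpose_apply]
      apply ContDiffOn.sub contDiffOn_const
      exact ContDiffOn.sum fun c _ => (ContDiffOn.sum fun d _ =>
        ((hBsm d a).contDiffOn.mul (hGism d c))).mul (hBsm c b).contDiffOn
    set w : (Fin (n + 1) → ℝ) → (Fin m → ℝ) := fun x => P x *ᵥ ELv x with hwdef
    have hwsm : ContDiffOn ℝ (⊤ : ℕ∞) w U := by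
      apply contDiffOn_pi.2 fun a => ?_
      simp only [hwdef, Matrix.mulVec, dotProduct]
      exact ContDiffOn.sum fun b _ => (hPsm a b).mul
        ((contDiff_eulerLagrange hL hφ b).contDiffOn)
    have hBw : ∀ x ∈ U, B x *ᵥ w x = 0 := by
      intro x hx
      simp only [hwdef]
      rw [Matrix.mulVec_mulVec, hBP x hx, Matrix.zero_mulVec]
    have hELw : ∀ x ∈ U, ELv x ⬝ᵥ w x = w x ⬝ᵥ w x := by
      intro x hx
      have hw' : w x = ELv x - ((B x)ᵀ * Gi x * B x) *ᵥ ELv x := by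
        simp only [hwdef, hPdef]
        rw [Matrix.sub_mulVec, Matrix.one_mulVec]
      nth_rewrite 2 [hw']
      rw [sub_dotProduct]
      have : (((B x)ᵀ * Gi x * B x) *ᵥ ELv x) ⬝ᵥ w x = 0 := by
        rw [Matrix.mul_assoc, ← Matrix.mulVec_mulVec, Matrix.mulVec_transpose,
          ← Matrix.dotProduct_mulVec, hBw x hx, dotProduct_zero]
      rw [this, sub_zero]
    -- the key pointwise claim
    have hw0 : ∀ x ∈ U, w x = 0 := by
      intro x0 hx0
      by_contra hne
      obtain ⟨ε, hε, hball⟩ := Metric.isOpen_iff.mp hUopen x0 hx0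
      set f : ContDiffBump x0 := ⟨ε / 4, ε / 2, by positivity, by linarith⟩ with hfdef
      have hrOut : f.rOut = ε / 2 := rfl
      have htsupp : tsupport ⇑f ⊆ U := by
        rw [f.tsupport_eq, hrOut]
        exact subset_trans (Metric.closedBall_subset_ball (by linarith)) hball
      set V : (Fin (n + 1) → ℝ) → (Fin m → ℝ) := fun x => f x • w x with hVdef
      have hVsm : ContDiff ℝ (⊤ : ℕ∞) V :=
        contDiff_smul_extend hUopen f.contDiff hwsm htsupp
      have hVsupp : Function.support V ⊆ Function.support ⇑f := by
        intro x hx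
        simp only [Function.mem_support] at hx ⊢
        intro h0
        apply hx
        show f x • w x = 0
        rw [h0, zero_smul]
      have hVcs : HasCompactSupport V := f.hasCompactSupport.mono hVsupp
      have hVts : tsupport V ⊆ U := subset_trans (closure_mono hVsupp) htsupp
      have hconstr : ∀ x ∈ U, ∀ α, ∑ a, A α a x (φ x) (jetD φ x) * V x a = 0 := by
        intro x hx α
        have heq1 : ∑ a, A α a x (φ x) (jetD φ x) * V x a = f x * (B x *ᵥ w x) α := by
          simp only [hVdef, Pi.smul_apply, smul_eq_mul, Matrix.mulVec, dotProduct,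
            Finset.mul_sum]
          refine Finset.sum_congr rfl fun a _ => ?_
          rw [show B x α a = A α a x (φ x) (jetD φ x) from rfl]
          ring
        rw [heq1, hBw x hx]
        simp
      have hint := hyp V hVsm hVcs hVts hconstr
      set h : (Fin (n + 1) → ℝ) → ℝ := fun x => f x * (ELv x ⬝ᵥ w x) with hhdef
      have hinteq : ∀ x, (∑ a, eulerLagrange L φ a x * V x a) = h x := by
        intro x
        simp only [hhdef, hVdef, Pi.smul_apply, smul_eq_mul, dotProduct,
          Finset.mul_sum]
        refine Finset.sum_congr rfl fun a _ => ?_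
        rw [show ELv x a = eulerLagrange L φ a x from rfl]
        ring
      simp only [hinteq] at hint
      have hgOn : ContDiffOn ℝ (⊤ : ℕ∞) (fun x => ELv x ⬝ᵥ w x) U := by
        simp only [dotProduct]
        exact ContDiffOn.sum fun a _ =>
          (contDiff_eulerLagrange hL hφ a).contDiffOn.mul (contDiffOn_pi.1 hwsm a)
      have hcont : Continuous h :=
        continuous_mul_extend hUopen f.continuous hgOn.continuousOn htsupp
      have hfzero : ∀ x, x ∉ U → f x = 0 := fun x hx =>
        image_eq_zero_of_notMem_tsupport (fun hh => hx (htsupp hh))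
      have hnonneg : 0 ≤ h := by
        intro x
        by_cases hx : x ∈ U
        · show (0:ℝ) ≤ f x * (ELv x ⬝ᵥ w x)
          rw [hELw x hx]
          exact mul_nonneg f.nonneg (Finset.sum_nonneg fun a _ => mul_self_nonneg _)
        · show (0:ℝ) ≤ f x * (ELv x ⬝ᵥ w x)
          rw [hfzero x hx, zero_mul]
      have hh0 : h x0 ≠ 0 := by
        have hf0 : 0 < f x0 := f.pos_of_mem_ball (Metric.mem_ball_self (by rw [hrOut]; positivity))
        show f x0 * (ELv x0 ⬝ᵥ w x0) ≠ 0
        rw [hELw x0 hx0]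
        exact mul_ne_zero hf0.ne' (fun hc => hne (dotProduct_self_eq_zero.mp hc))
      have hcs : HasCompactSupport h := by
        refine f.hasCompactSupport.mono (fun x hx => ?_)
        intro h0
        apply hx
        show f x * (ELv x ⬝ᵥ w x) = 0
        rw [h0, zero_mul]
      have hpos : 0 < ∫ x, h x :=
        hcont.integral_pos_of_hasCompactSupport_nonneg_nonzero hcs hnonneg hh0
      rw [setIntegral_eq_integral_of_forall_compl_eq_zero (fun x hx => by
        show f x * (ELv x ⬝ᵥ w x) = 0
        rw [hfzero x hx, zero_mul])] at hint
      exact hpos.ne' hint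
    refine ⟨fun α x => (Gi x *ᵥ (B x *ᵥ ELv x)) α, ?_, ?_⟩
    · intro α
      simp only [Matrix.mulVec, dotProduct]
      exact ContDiffOn.sum fun j _ => (hGism α j).mul (ContDiffOn.sum fun a _ =>
        (hBsm j a).contDiffOn.mul (contDiff_eulerLagrange hL hφ a).contDiffOn)
    · intro x hx a
      have h1 : ELv x = ((B x)ᵀ * Gi x * B x) *ᵥ ELv x := by
        have hz := hw0 x hx
        simp only [hwdef, hPdef] at hz
        rw [Matrix.sub_mulVec, Matrix.one_mulVec] at hz
        exact sub_eq_zero.mp hz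
      calc eulerLagrange L φ a x = ELv x a := rfl
        _ = (((B x)ᵀ * Gi x * B x) *ᵥ ELv x) a := by rw [← h1]
        _ = ((B x)ᵀ *ᵥ (Gi x *ᵥ (B x *ᵥ ELv x))) a := by
            rw [Matrix.mulVec_mulVec, Matrix.mulVec_mulVec]
        _ = ∑ α, (Gi x *ᵥ (B x *ᵥ ELv x)) α * A α a x (φ x) (jetD φ x) := by
            simp only [Matrix.mulVec, dotProduct, Matrix.transpose_apply]
            exact Finset.sum_congr rfl fun α _ => by
              rw [mul_comm, show B x α a = A α a x (φ x) (jetD φ x) from rfl]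
  · -- (ii) → (i)
    rintro ⟨lam, hlam, heq⟩ V hV hVc hVs hadm
    rw [setIntegral_congr_fun hUopen.measurableSet
      (g := fun _ => (0 : ℝ)) ?_, integral_zero]
    intro x hx
    simp only
    calc ∑ a, eulerLagrange L φ a x * V x a
        = ∑ a, (∑ α, lam α x * A α a x (φ x) (jetD φ x)) * V x a := by
          refine Finset.sum_congr rfl fun a _ => ?_
          rw [heq x hx a]
      _ = ∑ α, lam α x * ∑ a, A α a x (φ x) (jetD φ x) * V x a := by
          simp_rw [Finset.sum_mul, Finset.mul_sum]
          rw [Finset.sum_comm]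
          simp [mul_assoc]
      _ = 0 := by
          refine Finset.sum_eq_zero fun α _ => ?_
          rw [hadm x hx α, mul_zero]
end

section
/- Suppose x, y, θ, λ, μ : ℝ × [0,ℓ] → ℝ are smooth and satisfy the nonholonomic planar Cosserat rod equations ρẍ + Kx⁗ = λ, ρÿ + Ky⁗ = μ, αθ̈ − βθ″ = R(λ y′ − μ x′) together with the rolling constraints ẋ + R θ̇ y′ = 0 and ẏ − R θ̇ x′ = 0 on ℝ × [0,ℓ], and suppose the free-end boundary conditions hold: for all t ∈ ℝ, x″ = y″ = θ′ = 0 and x‴ = y‴ = 0 at s = 0 and at s = ℓ. Then the total energy E(t) = ∫₀^ℓ [ (ρ/2)(ẋ² + ẏ²) + (α/2)θ̇² + (K/2)((x″)² + (y″)²) + (β/2)(θ′)² ] ds is constant in t. -/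
open MeasureTheory

/-- Partial derivative with respect to the first (time) variable. -/
noncomputable def pt (f : ℝ → ℝ → ℝ) : ℝ → ℝ → ℝ := fun t s => deriv (fun τ => f τ s) t

/-- Partial derivative with respect to the second (arclength) variable. -/
noncomputable def ps (f : ℝ → ℝ → ℝ) : ℝ → ℝ → ℝ := fun t s => deriv (fun σ => f t σ) s

/-- Smoothness of a field of two real variables. -/
def Smooth2 (f : ℝ → ℝ → ℝ) : Prop := ContDiff ℝ (⊤ : ℕ∞) (fun p : ℝ × ℝ => f p.1 p.2)

lemma Smooth2.diff_t {f : ℝ → ℝ → ℝ} (hf : Smooth2 f) (s : ℝ) :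
    Differentiable ℝ (fun τ => f τ s) :=
  (hf.differentiable (by simp)).comp (differentiable_id.prodMk (differentiable_const s))

lemma Smooth2.diff_s {f : ℝ → ℝ → ℝ} (hf : Smooth2 f) (t : ℝ) :
    Differentiable ℝ (fun σ => f t σ) :=
  (hf.differentiable (by simp)).comp ((differentiable_const t).prodMk differentiable_id)

lemma hasDerivAt_pt {f : ℝ → ℝ → ℝ} (hf : Smooth2 f) (t s : ℝ) :
    HasDerivAt (fun τ => f τ s) (pt f t s) t :=
  ((hf.diff_t s) t).hasDerivAt

lemma hasDerivAt_ps {f : ℝ → ℝ → ℝ} (hf : Smooth2 f) (t s : ℝ) :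
    HasDerivAt (fun σ => f t σ) (ps f t s) s :=
  ((hf.diff_s t) s).hasDerivAt

lemma pt_eq_fderiv {f : ℝ → ℝ → ℝ} (hf : Smooth2 f) (t s : ℝ) :
    pt f t s = fderiv ℝ (fun p : ℝ × ℝ => f p.1 p.2) (t, s) (1, 0) := by
  have h := ((hf.differentiable (by simp)) ((t : ℝ), s)).hasFDerivAt.comp_hasDerivAt t
    ((hasDerivAt_id t).prodMk (hasDerivAt_const t s))
  have h' : HasDerivAt (fun τ => f τ s)
      (fderiv ℝ (fun p : ℝ × ℝ => f p.1 p.2) (t, s) (1, 0)) t := h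
  exact h'.deriv

lemma ps_eq_fderiv {f : ℝ → ℝ → ℝ} (hf : Smooth2 f) (t s : ℝ) :
    ps f t s = fderiv ℝ (fun p : ℝ × ℝ => f p.1 p.2) (t, s) (0, 1) := by
  have h := ((hf.differentiable (by simp)) ((t : ℝ), s)).hasFDerivAt.comp_hasDerivAt s
    ((hasDerivAt_const s t).prodMk (hasDerivAt_id s))
  have h' : HasDerivAt (fun σ => f t σ)
      (fderiv ℝ (fun p : ℝ × ℝ => f p.1 p.2) (t, s) (0, 1)) s := h
  exact h'.deriv

lemma Smooth2.ptS {f : ℝ → ℝ → ℝ} (hf : Smooth2 f) : Smooth2 (pt f) := by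
  have h : (fun p : ℝ × ℝ => pt f p.1 p.2)
      = fun p : ℝ × ℝ => (fderiv ℝ (fun q : ℝ × ℝ => f q.1 q.2) p) (1, 0) := by
    funext p; exact pt_eq_fderiv hf p.1 p.2
  unfold Smooth2
  rw [h]
  exact (ContinuousLinearMap.apply ℝ ℝ (((1 : ℝ), (0 : ℝ)))).contDiff.comp
    (hf.fderiv_right (by simp))

lemma Smooth2.psS {f : ℝ → ℝ → ℝ} (hf : Smooth2 f) : Smooth2 (ps f) := by
  have h : (fun p : ℝ × ℝ => ps f p.1 p.2)
      = fun p : ℝ × ℝ => (fderiv ℝ (fun q : ℝ × ℝ => f q.1 q.2) p) (0, 1) := by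
    funext p; exact ps_eq_fderiv hf p.1 p.2
  unfold Smooth2
  rw [h]
  exact (ContinuousLinearMap.apply ℝ ℝ (((0 : ℝ), (1 : ℝ)))).contDiff.comp
    (hf.fderiv_right (by simp))

lemma pt_ps_comm {f : ℝ → ℝ → ℝ} (hf : Smooth2 f) (t s : ℝ) :
    pt (ps f) t s = ps (pt f) t s := by
  set F : ℝ × ℝ → ℝ := fun p => f p.1 p.2 with hFdef
  have hdF : Differentiable ℝ F := hf.differentiable (by simp)
  have hG : ContDiff ℝ (⊤ : ℕ∞) (fderiv ℝ F) := hf.fderiv_right (by simp)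
  have hGd : DifferentiableAt ℝ (fderiv ℝ F) (t, s) := (hG.differentiable (by simp)) (t, s)
  have hsymm := second_derivative_symmetric (f := F) (f' := fderiv ℝ F)
    (f'' := fderiv ℝ (fderiv ℝ F) (t, s)) (fun p => (hdF p).hasFDerivAt) hGd.hasFDerivAt
  have h1 : pt (ps f) t s = fderiv ℝ (fderiv ℝ F) (t, s) (1, 0) (0, 1) := by
    have hA : HasFDerivAt (fun p : ℝ × ℝ => fderiv ℝ F p (0, 1))
        ((ContinuousLinearMap.apply ℝ ℝ (((0 : ℝ), (1 : ℝ)))).comp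
          (fderiv ℝ (fderiv ℝ F) (t, s))) (t, s) :=
      (ContinuousLinearMap.apply ℝ ℝ (((0 : ℝ), (1 : ℝ)))).hasFDerivAt.comp _ hGd.hasFDerivAt
    have hB := hA.comp_hasDerivAt t ((hasDerivAt_id t).prodMk (hasDerivAt_const t s))
    have heq : (fun τ => ps f τ s) = fun τ => fderiv ℝ F (τ, s) (0, 1) := by
      funext τ; exact ps_eq_fderiv hf τ s
    show deriv (fun τ => ps f τ s) t = _
    rw [heq]
    simpa [Function.comp_def] using hB.deriv
  have h2 : ps (pt f) t s = fderiv ℝ (fderiv ℝ F) (t, s) (0, 1) (1, 0) := by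
    have hA : HasFDerivAt (fun p : ℝ × ℝ => fderiv ℝ F p (1, 0))
        ((ContinuousLinearMap.apply ℝ ℝ (((1 : ℝ), (0 : ℝ)))).comp
          (fderiv ℝ (fderiv ℝ F) (t, s))) (t, s) :=
      (ContinuousLinearMap.apply ℝ ℝ (((1 : ℝ), (0 : ℝ)))).hasFDerivAt.comp _ hGd.hasFDerivAt
    have hB := hA.comp_hasDerivAt s ((hasDerivAt_const s t).prodMk (hasDerivAt_id s))
    have heq : (fun σ => pt f t σ) = fun σ => fderiv ℝ F (t, σ) (1, 0) := by
      funext σ; exact pt_eq_fderiv hf t σ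
    show deriv (fun σ => pt f t σ) s = _
    rw [heq]
    simpa [Function.comp_def] using hB.deriv
  rw [h1, h2, hsymm (1, 0) (0, 1)]

/-- Energy density of the planar Cosserat rod. -/
noncomputable def Edens (ρ α β K : ℝ) (x y θ : ℝ → ℝ → ℝ) : ℝ → ℝ → ℝ := fun t s =>
  ρ / 2 * ((pt x t s) ^ 2 + (pt y t s) ^ 2) + α / 2 * (pt θ t s) ^ 2
    + K / 2 * ((ps (ps x) t s) ^ 2 + (ps (ps y) t s) ^ 2) + β / 2 * (ps θ t s) ^ 2

/-- total energy conservation for the nonholonomic planar Cosserat rod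
with free ends. -/
theorem total_energy_conservation_nonholonomic_rod
    (ρ α β K R ℓ : ℝ) (hρ : 0 < ρ) (hα : 0 < α) (hβ : 0 < β) (hK : 0 < K) (hR : 0 < R)
    (hℓ : 0 < ℓ) (x y θ lam mu : ℝ → ℝ → ℝ)
    (hx : Smooth2 x) (hy : Smooth2 y) (hθ : Smooth2 θ) (hlam : Smooth2 lam) (hmu : Smooth2 mu)
    (heqx : ∀ t : ℝ, ∀ s ∈ Set.Icc (0 : ℝ) ℓ,
      ρ * pt (pt x) t s + K * ps (ps (ps (ps x))) t s = lam t s)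
    (heqy : ∀ t : ℝ, ∀ s ∈ Set.Icc (0 : ℝ) ℓ,
      ρ * pt (pt y) t s + K * ps (ps (ps (ps y))) t s = mu t s)
    (heqθ : ∀ t : ℝ, ∀ s ∈ Set.Icc (0 : ℝ) ℓ,
      α * pt (pt θ) t s - β * ps (ps θ) t s
        = R * (lam t s * ps y t s - mu t s * ps x t s))
    (hc1 : ∀ t : ℝ, ∀ s ∈ Set.Icc (0 : ℝ) ℓ, pt x t s + R * pt θ t s * ps y t s = 0)
    (hc2 : ∀ t : ℝ, ∀ s ∈ Set.Icc (0 : ℝ) ℓ, pt y t s - R * pt θ t s * ps x t s = 0)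
    (hbc : ∀ t : ℝ, ∀ s : ℝ, s = 0 ∨ s = ℓ →
      ps (ps x) t s = 0 ∧ ps (ps y) t s = 0 ∧ ps θ t s = 0 ∧
        ps (ps (ps x)) t s = 0 ∧ ps (ps (ps y)) t s = 0) :
    ∀ t₁ t₂ : ℝ,
      (∫ s in (0 : ℝ)..ℓ, Edens ρ α β K x y θ t₁ s)
        = ∫ s in (0 : ℝ)..ℓ, Edens ρ α β K x y θ t₂ s := by
  set e : ℝ → ℝ → ℝ := Edens ρ α β K x y θ with he
  set D : ℝ → ℝ → ℝ := fun t s =>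
    ρ * (pt x t s * pt (pt x) t s + pt y t s * pt (pt y) t s)
    + α * (pt θ t s * pt (pt θ) t s)
    + K * (ps (ps x) t s * pt (ps (ps x)) t s + ps (ps y) t s * pt (ps (ps y)) t s)
    + β * (ps θ t s * pt (ps θ) t s) with hD
  -- continuity facts
  have cptx : Continuous fun p : ℝ × ℝ => pt x p.1 p.2 := ContDiff.continuous hx.ptS
  have cpty : Continuous fun p : ℝ × ℝ => pt y p.1 p.2 := ContDiff.continuous hy.ptS
  have cptθ : Continuous fun p : ℝ × ℝ => pt θ p.1 p.2 := ContDiff.continuous hθ.ptS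
  have cpsθ : Continuous fun p : ℝ × ℝ => ps θ p.1 p.2 := ContDiff.continuous hθ.psS
  have cps2x : Continuous fun p : ℝ × ℝ => ps (ps x) p.1 p.2 := ContDiff.continuous hx.psS.psS
  have cps2y : Continuous fun p : ℝ × ℝ => ps (ps y) p.1 p.2 := ContDiff.continuous hy.psS.psS
  have cpt2x : Continuous fun p : ℝ × ℝ => pt (pt x) p.1 p.2 := ContDiff.continuous hx.ptS.ptS
  have cpt2y : Continuous fun p : ℝ × ℝ => pt (pt y) p.1 p.2 := ContDiff.continuous hy.ptS.ptS
  have cpt2θ : Continuous fun p : ℝ × ℝ => pt (pt θ) p.1 p.2 := ContDiff.continuous hθ.ptS.ptS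
  have cptpsθ : Continuous fun p : ℝ × ℝ => pt (ps θ) p.1 p.2 :=
    ContDiff.continuous hθ.psS.ptS
  have cptps2x : Continuous fun p : ℝ × ℝ => pt (ps (ps x)) p.1 p.2 :=
    ContDiff.continuous hx.psS.psS.ptS
  have cptps2y : Continuous fun p : ℝ × ℝ => pt (ps (ps y)) p.1 p.2 :=
    ContDiff.continuous hy.psS.psS.ptS
  have hec : Continuous fun p : ℝ × ℝ => e p.1 p.2 := by
    simp only [he, Edens]
    exact ((((continuous_const.mul ((cptx.pow 2).add (cpty.pow 2))).add
      (continuous_const.mul (cptθ.pow 2))).add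
      (continuous_const.mul ((cps2x.pow 2).add (cps2y.pow 2)))).add
      (continuous_const.mul (cpsθ.pow 2)))
  have hDc : Continuous fun p : ℝ × ℝ => D p.1 p.2 := by
    simp only [hD]
    exact ((((continuous_const.mul ((cptx.mul cpt2x).add (cpty.mul cpt2y))).add
      (continuous_const.mul (cptθ.mul cpt2θ))).add
      (continuous_const.mul ((cps2x.mul cptps2x).add (cps2y.mul cptps2y)))).add
      (continuous_const.mul (cpsθ.mul cptpsθ)))
  -- time derivative of the energy density
  have hC : ∀ t s : ℝ, HasDerivAt (fun τ => e τ s) (D t s) t := by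
    intro t s
    have hX := (hasDerivAt_pt hx.ptS t s).fun_pow 2
    have hY := (hasDerivAt_pt hy.ptS t s).fun_pow 2
    have hΘ := (hasDerivAt_pt hθ.ptS t s).fun_pow 2
    have hX2 := (hasDerivAt_pt hx.psS.psS t s).fun_pow 2
    have hY2 := (hasDerivAt_pt hy.psS.psS t s).fun_pow 2
    have hΘ1 := (hasDerivAt_pt hθ.psS t s).fun_pow 2
    have hcomb := ((((hX.add hY).const_mul (ρ / 2)).add (hΘ.const_mul (α / 2))).add
      ((hX2.add hY2).const_mul (K / 2))).add (hΘ1.const_mul (β / 2))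
    have : (fun τ => e τ s) = fun τ =>
        ρ / 2 * ((pt x τ s) ^ 2 + (pt y τ s) ^ 2) + α / 2 * (pt θ τ s) ^ 2
          + K / 2 * ((ps (ps x) τ s) ^ 2 + (ps (ps y) τ s) ^ 2) + β / 2 * (ps θ τ s) ^ 2 := rfl
    rw [this]
    refine hcomb.congr_deriv ?_
    simp only [hD, pow_one, Nat.cast_ofNat]
    ring
  -- the spatial antiderivative and vanishing of the inner integral
  have hInt0 : ∀ t : ℝ, (∫ s in (0 : ℝ)..ℓ, D t s) = 0 := by
    intro t
    set F : ℝ → ℝ := fun s => β * (pt θ t s * ps θ t s)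
      + K * (ps (ps x) t s * pt (ps x) t s - pt x t s * ps (ps (ps x)) t s)
      + K * (ps (ps y) t s * pt (ps y) t s - pt y t s * ps (ps (ps y)) t s) with hFdef
    have key : ∀ s ∈ Set.uIcc (0 : ℝ) ℓ, HasDerivAt F (D t s) s := by
      intro s hs
      rw [Set.uIcc_of_le hℓ.le] at hs
      have h1 := hasDerivAt_ps hθ.ptS t s
      have h2 := hasDerivAt_ps hθ.psS t s
      have h3 := hasDerivAt_ps hx.psS.psS t s
      have h4 := hasDerivAt_ps hx.psS.ptS t s
      have h5 := hasDerivAt_ps hx.ptS t s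
      have h6 := hasDerivAt_ps hx.psS.psS.psS t s
      have h3y := hasDerivAt_ps hy.psS.psS t s
      have h4y := hasDerivAt_ps hy.psS.ptS t s
      have h5y := hasDerivAt_ps hy.ptS t s
      have h6y := hasDerivAt_ps hy.psS.psS.psS t s
      have hθ0 := hasDerivAt_ps hθ.ptS t s  -- same as h1
      have hθ1 := hasDerivAt_ps hθ.psS t s
      have hptθ := hasDerivAt_pt hθ t s
      have hraw := ((((hasDerivAt_ps hθ.ptS t s).mul (hasDerivAt_ps hθ.psS t s)).const_mul
          β).add
        ((((hasDerivAt_ps hx.psS.psS t s).mul (hasDerivAt_ps hx.psS.ptS t s)).sub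
          ((hasDerivAt_ps hx.ptS t s).mul (hasDerivAt_ps hx.psS.psS.psS t s))).const_mul K)).add
        ((((hasDerivAt_ps hy.psS.psS t s).mul (hasDerivAt_ps hy.psS.ptS t s)).sub
          ((hasDerivAt_ps hy.ptS t s).mul (hasDerivAt_ps hy.psS.psS.psS t s))).const_mul K)
      -- hraw : HasDerivAt F (raw) s  (functions are defeq)
      have hraw' : HasDerivAt F
          (β * (ps (pt θ) t s * ps θ t s + pt θ t s * ps (ps θ) t s)
            + K * ((ps (ps (ps x)) t s * pt (ps x) t s
                + ps (ps x) t s * ps (pt (ps x)) t s)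
              - (ps (pt x) t s * ps (ps (ps x)) t s
                + pt x t s * ps (ps (ps (ps x))) t s))
            + K * ((ps (ps (ps y)) t s * pt (ps y) t s
                + ps (ps y) t s * ps (pt (ps y)) t s)
              - (ps (pt y) t s * ps (ps (ps y)) t s
                + pt y t s * ps (ps (ps (ps y))) t s))) s := hraw
      convert hraw' using 1
      have cθ := pt_ps_comm hθ t s
      have cx := pt_ps_comm hx t s
      have cy := pt_ps_comm hy t s
      have cxx := pt_ps_comm hx.psS t s
      have cyy := pt_ps_comm hy.psS t s
      simp only [hD]
      linear_combination (pt x t s) * heqx t s hs + (pt y t s) * heqy t s hs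
        + (pt θ t s) * heqθ t s hs + (lam t s) * hc1 t s hs + (mu t s) * hc2 t s hs
        + (β * ps θ t s) * cθ - (K * ps (ps (ps x)) t s) * cx
        - (K * ps (ps (ps y)) t s) * cy + (K * ps (ps x) t s) * cxx
        + (K * ps (ps y) t s) * cyy
    have hint : IntervalIntegrable (fun s => D t s) MeasureTheory.volume 0 ℓ :=
      (hDc.comp (Continuous.prodMk_right t)).intervalIntegrable 0 ℓ
    rw [intervalIntegral.integral_eq_sub_of_hasDerivAt key hint]
    obtain ⟨b1, b2, b3, b4, b5⟩ := hbc t ℓ (Or.inr rfl)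
    obtain ⟨a1, a2, a3, a4, a5⟩ := hbc t 0 (Or.inl rfl)
    simp [hFdef, a1, a2, a3, a4, a5, b1, b2, b3, b4, b5]
  -- main argument
  have main : ∀ t₁ t₂ : ℝ, t₁ ≤ t₂ →
      (∫ s in (0 : ℝ)..ℓ, e t₁ s) = ∫ s in (0 : ℝ)..ℓ, e t₂ s := by
    intro t₁ t₂ h12
    have int1 : IntervalIntegrable (fun s => e t₁ s) MeasureTheory.volume 0 ℓ :=
      (hec.comp (Continuous.prodMk_right t₁)).intervalIntegrable 0 ℓ
    have int2 : IntervalIntegrable (fun s => e t₂ s) MeasureTheory.volume 0 ℓ :=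
      (hec.comp (Continuous.prodMk_right t₂)).intervalIntegrable 0 ℓ
    have hsub : (∫ s in (0 : ℝ)..ℓ, e t₂ s) - ∫ s in (0 : ℝ)..ℓ, e t₁ s
        = ∫ s in (0 : ℝ)..ℓ, (e t₂ s - e t₁ s) :=
      (intervalIntegral.integral_sub int2 int1).symm
    have hFTC : ∀ s : ℝ, e t₂ s - e t₁ s = ∫ t in t₁..t₂, D t s := by
      intro s
      have hint : IntervalIntegrable (fun t => D t s) MeasureTheory.volume t₁ t₂ :=
        (hDc.comp (continuous_id.prodMk continuous_const)).intervalIntegrable t₁ t₂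
      exact (intervalIntegral.integral_eq_sub_of_hasDerivAt (fun τ _ => hC τ s) hint).symm
    have swap : (∫ s in (0 : ℝ)..ℓ, ∫ t in t₁..t₂, D t s)
        = ∫ t in t₁..t₂, ∫ s in (0 : ℝ)..ℓ, D t s := by
      rw [intervalIntegral.integral_of_le hℓ.le, intervalIntegral.integral_of_le h12]
      have hi : MeasureTheory.Integrable (Function.uncurry fun s t => D t s)
          ((MeasureTheory.volume.restrict (Set.Ioc (0 : ℝ) ℓ)).prod
            (MeasureTheory.volume.restrict (Set.Ioc t₁ t₂))) := by
        rw [MeasureTheory.Measure.prod_restrict]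
        refine MeasureTheory.IntegrableOn.mono_set ?_
          (Set.prod_mono Set.Ioc_subset_Icc_self Set.Ioc_subset_Icc_self)
        exact ContinuousOn.integrableOn_compact (isCompact_Icc.prod isCompact_Icc)
          ((hDc.comp (continuous_snd.prodMk continuous_fst)).continuousOn)
      have hsw := MeasureTheory.integral_integral_swap hi
      simp_rw [intervalIntegral.integral_of_le h12, intervalIntegral.integral_of_le hℓ.le]
      exact hsw
    have : (∫ s in (0 : ℝ)..ℓ, e t₂ s) - ∫ s in (0 : ℝ)..ℓ, e t₁ s = 0 := by
      rw [hsub]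
      rw [intervalIntegral.integral_congr (g := fun s => ∫ t in t₁..t₂, D t s)
        (fun s _ => hFTC s)]
      rw [swap]
      simp [hInt0]
    linarith [this]
  intro t₁ t₂
  rcases le_total t₁ t₂ with h | h
  · exact main t₁ t₂ h
  · exact (main t₂ t₁ h).symm
end

section
/- Fix a smooth function p : ℝ × [0,ℓ] → ℝ, real numbers t₀ < t₁, and smooth fields x, y, θ : ℝ × [0,ℓ] → ℝ. Consider the Lagrangian density L = (ρ/2)(ẋ² + ẏ²) + (α/2)θ̇² − (β/2)(θ′)² − (K/2)((x″)² + (y″)²) − (p/2)((x′)² + (y′)² − 1) and the action S = ∫_{t₀}^{t₁} ∫₀^ℓ L dt ds. Then (x, y, θ) is a stationary point of S under all smooth variations (V_x, V_y, V_θ) with compact support contained in (t₀, t₁) × (0, ℓ) — that is, the derivative at ε = 0 of ε ↦ S(x + εV_x, y + εV_y, θ + εV_θ) vanishes for all such variations — if and only if the free planar Cosserat rod equations ρẍ + Kx⁗ = (p x′)′, ρÿ + Ky⁗ = (p y′)′, and αθ̈ − βθ″ = 0 hold on (t₀, t₁) × (0, ℓ). -/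
open MeasureTheory

/-- Lagrangian density of the planar Cosserat rod with inextensibility multiplier `p`. -/
noncomputable def rodLag (ρ α β K : ℝ) (p x y θ : ℝ → ℝ → ℝ) : ℝ → ℝ → ℝ := fun t s =>
  ρ / 2 * ((pt x t s) ^ 2 + (pt y t s) ^ 2) + α / 2 * (pt θ t s) ^ 2
    - β / 2 * (ps θ t s) ^ 2 - K / 2 * ((ps (ps x) t s) ^ 2 + (ps (ps y) t s) ^ 2)
    - p t s / 2 * ((ps x t s) ^ 2 + (ps y t s) ^ 2 - 1)

namespace Rod


lemma hasDerivAt_pt {f : ℝ → ℝ → ℝ} (hf : Smooth2 f) (t s : ℝ) :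
    HasDerivAt (fun τ => f τ s) (pt f t s) t := by
  have h1 : HasDerivAt (fun τ : ℝ => (τ, s)) ((1 : ℝ), (0 : ℝ)) t :=
    (hasDerivAt_id t).prodMk (hasDerivAt_const t s)
  have h2 := (hf.differentiable (by simp) (t, s)).hasFDerivAt.comp_hasDerivAt t h1
  have : pt f t s = fderiv ℝ (fun p : ℝ × ℝ => f p.1 p.2) (t, s) (1, 0) := h2.deriv
  rw [this]; exact h2

lemma hasDerivAt_ps {f : ℝ → ℝ → ℝ} (hf : Smooth2 f) (t s : ℝ) :
    HasDerivAt (fun σ => f t σ) (ps f t s) s := by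
  have h1 : HasDerivAt (fun σ : ℝ => (t, σ)) ((0 : ℝ), (1 : ℝ)) s :=
    (hasDerivAt_const s t).prodMk (hasDerivAt_id s)
  have h2 := (hf.differentiable (by simp) (t, s)).hasFDerivAt.comp_hasDerivAt s h1
  have : ps f t s = fderiv ℝ (fun p : ℝ × ℝ => f p.1 p.2) (t, s) (0, 1) := h2.deriv
  rw [this]; exact h2

lemma pt_eq_fderiv {f : ℝ → ℝ → ℝ} (hf : Smooth2 f) (t s : ℝ) :
    pt f t s = fderiv ℝ (fun p : ℝ × ℝ => f p.1 p.2) (t, s) (1, 0) := by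
  have h1 : HasDerivAt (fun τ : ℝ => (τ, s)) ((1 : ℝ), (0 : ℝ)) t :=
    (hasDerivAt_id t).prodMk (hasDerivAt_const t s)
  exact ((hf.differentiable (by simp) (t, s)).hasFDerivAt.comp_hasDerivAt t h1).deriv

lemma ps_eq_fderiv {f : ℝ → ℝ → ℝ} (hf : Smooth2 f) (t s : ℝ) :
    ps f t s = fderiv ℝ (fun p : ℝ × ℝ => f p.1 p.2) (t, s) (0, 1) := by
  have h1 : HasDerivAt (fun σ : ℝ => (t, σ)) ((0 : ℝ), (1 : ℝ)) s :=
    (hasDerivAt_const s t).prodMk (hasDerivAt_id s)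
  exact ((hf.differentiable (by simp) (t, s)).hasFDerivAt.comp_hasDerivAt s h1).deriv

lemma smooth2_pt {f : ℝ → ℝ → ℝ} (hf : Smooth2 f) : Smooth2 (pt f) := by
  have h : ContDiff ℝ (⊤ : ℕ∞) (fderiv ℝ (fun p : ℝ × ℝ => f p.1 p.2)) :=
    hf.fderiv_right (by exact_mod_cast le_top)
  have h2 : ContDiff ℝ (⊤ : ℕ∞)
      (fun q : ℝ × ℝ => fderiv ℝ (fun p : ℝ × ℝ => f p.1 p.2) q (1, 0)) :=
    (ContinuousLinearMap.apply ℝ ℝ ((1 : ℝ), (0 : ℝ))).contDiff.comp h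
  have he : (fun q : ℝ × ℝ => pt f q.1 q.2)
      = fun q : ℝ × ℝ => fderiv ℝ (fun p : ℝ × ℝ => f p.1 p.2) q (1, 0) :=
    funext fun q => pt_eq_fderiv hf q.1 q.2
  unfold Smooth2; rw [he]; exact h2

lemma smooth2_ps {f : ℝ → ℝ → ℝ} (hf : Smooth2 f) : Smooth2 (ps f) := by
  have h : ContDiff ℝ (⊤ : ℕ∞) (fderiv ℝ (fun p : ℝ × ℝ => f p.1 p.2)) :=
    hf.fderiv_right (by exact_mod_cast le_top)
  have h2 : ContDiff ℝ (⊤ : ℕ∞)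
      (fun q : ℝ × ℝ => fderiv ℝ (fun p : ℝ × ℝ => f p.1 p.2) q (0, 1)) :=
    (ContinuousLinearMap.apply ℝ ℝ ((0 : ℝ), (1 : ℝ))).contDiff.comp h
  have he : (fun q : ℝ × ℝ => ps f q.1 q.2)
      = fun q : ℝ × ℝ => fderiv ℝ (fun p : ℝ × ℝ => f p.1 p.2) q (0, 1) :=
    funext fun q => ps_eq_fderiv hf q.1 q.2
  unfold Smooth2; rw [he]; exact h2

lemma smooth2_cont {f : ℝ → ℝ → ℝ} (hf : Smooth2 f) :
    Continuous (fun q : ℝ × ℝ => f q.1 q.2) := hf.continuous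

lemma smooth2_add_smul {f g : ℝ → ℝ → ℝ} (hf : Smooth2 f) (hg : Smooth2 g) (ε : ℝ) :
    Smooth2 (fun t s => f t s + ε * g t s) := hf.add (contDiff_const.mul hg)

lemma smooth2_mul {f g : ℝ → ℝ → ℝ} (hf : Smooth2 f) (hg : Smooth2 g) :
    Smooth2 (fun t s => f t s * g t s) := hf.mul hg

lemma pt_add_smul {f g : ℝ → ℝ → ℝ} (hf : Smooth2 f) (hg : Smooth2 g) (ε : ℝ) :
    pt (fun t s => f t s + ε * g t s) = fun t s => pt f t s + ε * pt g t s := by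
  funext t s
  exact ((hasDerivAt_pt hf t s).add ((hasDerivAt_pt hg t s).const_mul ε)).deriv

lemma ps_add_smul {f g : ℝ → ℝ → ℝ} (hf : Smooth2 f) (hg : Smooth2 g) (ε : ℝ) :
    ps (fun t s => f t s + ε * g t s) = fun t s => ps f t s + ε * ps g t s := by
  funext t s
  exact ((hasDerivAt_ps hf t s).add ((hasDerivAt_ps hg t s).const_mul ε)).deriv

lemma pt_zero : pt (fun _ _ => (0:ℝ)) = fun _ _ => 0 := by
  funext t s; simp [pt]

lemma ps_zero : ps (fun _ _ => (0:ℝ)) = fun _ _ => 0 := by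
  funext t s; simp [ps]

/-- vanishing off the support -/
lemma val_zero {V : ℝ → ℝ → ℝ} {t s : ℝ}
    (h : (t, s) ∉ tsupport (fun q : ℝ × ℝ => V q.1 q.2)) : V t s = 0 :=
  image_eq_zero_of_notMem_tsupport (f := fun q : ℝ × ℝ => V q.1 q.2) h

lemma ps_zero_of_nmem {V : ℝ → ℝ → ℝ} {t s : ℝ}
    (h : (t, s) ∉ tsupport (fun q : ℝ × ℝ => V q.1 q.2)) : ps V t s = 0 := by
  have hmem : (tsupport (fun q : ℝ × ℝ => V q.1 q.2))ᶜ ∈ nhds (t, s) :=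
    (isClosed_tsupport _).isOpen_compl.mem_nhds h
  have hcont : Continuous (fun σ : ℝ => ((t, σ) : ℝ × ℝ)) := by continuity
  have hpre : (fun σ : ℝ => ((t, σ) : ℝ × ℝ)) ⁻¹'
      (tsupport (fun q : ℝ × ℝ => V q.1 q.2))ᶜ ∈ nhds s :=
    hcont.continuousAt.preimage_mem_nhds hmem
  have hev : (fun σ => V t σ) =ᶠ[nhds s] (fun _ => (0 : ℝ)) :=
    Filter.eventually_of_mem hpre fun σ hσ => image_eq_zero_of_notMem_tsupport (f := fun q : ℝ × ℝ => V q.1 q.2) hσ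
  show deriv (fun σ => V t σ) s = 0
  rw [hev.deriv_eq, deriv_const]

lemma pt_zero_of_nmem {V : ℝ → ℝ → ℝ} {t s : ℝ}
    (h : (t, s) ∉ tsupport (fun q : ℝ × ℝ => V q.1 q.2)) : pt V t s = 0 := by
  have hmem : (tsupport (fun q : ℝ × ℝ => V q.1 q.2))ᶜ ∈ nhds (t, s) :=
    (isClosed_tsupport _).isOpen_compl.mem_nhds h
  have hcont : Continuous (fun τ : ℝ => ((τ, s) : ℝ × ℝ)) := by continuity
  have hpre : (fun τ : ℝ => ((τ, s) : ℝ × ℝ)) ⁻¹'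
      (tsupport (fun q : ℝ × ℝ => V q.1 q.2))ᶜ ∈ nhds t :=
    hcont.continuousAt.preimage_mem_nhds hmem
  have hev : (fun τ => V τ s) =ᶠ[nhds t] (fun _ => (0 : ℝ)) :=
    Filter.eventually_of_mem hpre fun τ hτ => image_eq_zero_of_notMem_tsupport (f := fun q : ℝ × ℝ => V q.1 q.2) hτ
  show deriv (fun τ => V τ s) t = 0
  rw [hev.deriv_eq, deriv_const]

/-- 1-D integration by parts with vanishing boundary values. -/
lemma ibp_line {a b : ℝ} {u v u' v' : ℝ → ℝ}
    (hu : ∀ z, HasDerivAt u (u' z) z) (hv : ∀ z, HasDerivAt v (v' z) z)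
    (hcu : Continuous u') (hcv : Continuous v')
    (hva : v a = 0) (hvb : v b = 0) :
    ∫ z in a..b, u z * v' z = - ∫ z in a..b, u' z * v z := by
  have hucont : Continuous u := Differentiable.continuous fun z => (hu z).differentiableAt
  have hvcont : Continuous v := Differentiable.continuous fun z => (hv z).differentiableAt
  have h1 : IntervalIntegrable (fun z => u' z * v z) volume a b :=
    (hcu.mul hvcont).intervalIntegrable a b
  have h2 : IntervalIntegrable (fun z => u z * v' z) volume a b :=
    (hucont.mul hcv).intervalIntegrable a b
  have hsum := intervalIntegral.integral_deriv_mul_eq_sub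
    (u' := u') (v' := v') (fun z _ => hu z) (fun z _ => hv z)
    (hcu.intervalIntegrable a b) (hcv.intervalIntegrable a b)
  rw [hva, hvb, mul_zero, mul_zero, sub_zero] at hsum
  rw [intervalIntegral.integral_add h1 h2] at hsum
  linarith

variable {t₀ t₁ l : ℝ}

/-- Integrability on the rectangle from continuity. -/
lemma intOn {F : ℝ × ℝ → ℝ} (hF : Continuous F) :
    IntegrableOn F (Set.Ioc t₀ t₁ ×ˢ Set.Ioc 0 l) := by
  have h1 : IntegrableOn F (Set.Icc t₀ t₁ ×ˢ Set.Icc 0 l) :=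
    hF.locallyIntegrable.integrableOn_isCompact (isCompact_Icc.prod isCompact_Icc)
  exact h1.mono_set (Set.prod_mono Set.Ioc_subset_Icc_self Set.Ioc_subset_Icc_self)

/-- Convert the iterated interval integral into a set integral over the rectangle. -/
lemma conv_ts (ht : t₀ ≤ t₁) (hl : (0:ℝ) ≤ l) {f : ℝ → ℝ → ℝ}
    (hf : Continuous (fun q : ℝ × ℝ => f q.1 q.2)) :
    ∫ t in t₀..t₁, ∫ s in (0:ℝ)..l, f t s
      = ∫ q in Set.Ioc t₀ t₁ ×ˢ Set.Ioc 0 l, f q.1 q.2 := by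
  have hint : IntegrableOn (fun q : ℝ × ℝ => f q.1 q.2)
      (Set.Ioc t₀ t₁ ×ˢ Set.Ioc 0 l) := intOn hf
  rw [Measure.volume_eq_prod] at hint ⊢
  rw [setIntegral_prod _ hint]
  rw [intervalIntegral.integral_of_le ht]
  exact setIntegral_congr_fun measurableSet_Ioc fun t _ => by
    rw [intervalIntegral.integral_of_le hl]

/-- Convert in the other order. -/
lemma conv_st (ht : t₀ ≤ t₁) (hl : (0:ℝ) ≤ l) {f : ℝ → ℝ → ℝ}
    (hf : Continuous (fun q : ℝ × ℝ => f q.1 q.2)) :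
    ∫ s in (0:ℝ)..l, ∫ t in t₀..t₁, f t s
      = ∫ q in Set.Ioc t₀ t₁ ×ˢ Set.Ioc 0 l, f q.1 q.2 := by
  have hint : IntegrableOn (fun q : ℝ × ℝ => f q.1 q.2)
      (Set.Ioc t₀ t₁ ×ˢ Set.Ioc 0 l) := intOn hf
  rw [Measure.volume_eq_prod] at hint ⊢
  simp only [IntegrableOn, ← Measure.prod_restrict] at hint ⊢
  rw [integral_prod_symm _ hint]
  rw [intervalIntegral.integral_of_le hl]
  exact setIntegral_congr_fun measurableSet_Ioc fun s _ => by
    rw [intervalIntegral.integral_of_le ht]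

lemma contS {f : ℝ → ℝ → ℝ} (hf : Smooth2 f) (t : ℝ) : Continuous (fun σ => f t σ) :=
  (ContDiff.continuous (n := (⊤:ℕ∞)) hf).comp (Continuous.prodMk_right t)

lemma contT {f : ℝ → ℝ → ℝ} (hf : Smooth2 f) (s : ℝ) : Continuous (fun τ => f τ s) :=
  (ContDiff.continuous (n := (⊤:ℕ∞)) hf).comp (continuous_id.prodMk continuous_const)

lemma cont2 {f : ℝ → ℝ → ℝ} (hf : Smooth2 f) : Continuous (fun q : ℝ × ℝ => f q.1 q.2) :=
  ContDiff.continuous (n := (⊤:ℕ∞)) hf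

/-- Integration by parts in `s` at the level of rectangle integrals. -/
lemma ibp_s (ht : t₀ ≤ t₁) (hl : (0:ℝ) ≤ l) {g V : ℝ → ℝ → ℝ}
    (hg : Smooth2 g) (hV : Smooth2 V)
    (h0 : ∀ t, V t 0 = 0) (h1 : ∀ t, V t l = 0) :
    ∫ q in Set.Ioc t₀ t₁ ×ˢ Set.Ioc 0 l, g q.1 q.2 * ps V q.1 q.2
      = - ∫ q in Set.Ioc t₀ t₁ ×ˢ Set.Ioc 0 l, ps g q.1 q.2 * V q.1 q.2 := by
  have c1 : Continuous (fun q : ℝ × ℝ => g q.1 q.2 * ps V q.1 q.2) :=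
    (cont2 hg).mul (cont2 (smooth2_ps hV))
  have c2 : Continuous (fun q : ℝ × ℝ => ps g q.1 q.2 * V q.1 q.2) :=
    (cont2 (smooth2_ps hg)).mul (cont2 hV)
  calc ∫ q in Set.Ioc t₀ t₁ ×ˢ Set.Ioc 0 l, g q.1 q.2 * ps V q.1 q.2
      = ∫ t in t₀..t₁, ∫ s in (0:ℝ)..l, g t s * ps V t s := (conv_ts ht hl (f := fun t s => g t s * ps V t s) c1).symm
    _ = ∫ t in t₀..t₁, - ∫ s in (0:ℝ)..l, ps g t s * V t s := by
        refine intervalIntegral.integral_congr fun t _ => ?_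
        exact ibp_line (hasDerivAt_ps hg t) (hasDerivAt_ps hV t)
          (contS (smooth2_ps hg) t) (contS (smooth2_ps hV) t) (h0 t) (h1 t)
    _ = - ∫ t in t₀..t₁, ∫ s in (0:ℝ)..l, ps g t s * V t s :=
        intervalIntegral.integral_neg
    _ = - ∫ q in Set.Ioc t₀ t₁ ×ˢ Set.Ioc 0 l, ps g q.1 q.2 * V q.1 q.2 := by
        rw [conv_ts ht hl (f := fun t s => ps g t s * V t s) c2]

/-- Integration by parts in `t` at the level of rectangle integrals. -/
lemma ibp_t (ht : t₀ ≤ t₁) (hl : (0:ℝ) ≤ l) {g V : ℝ → ℝ → ℝ}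
    (hg : Smooth2 g) (hV : Smooth2 V)
    (h0 : ∀ s, V t₀ s = 0) (h1 : ∀ s, V t₁ s = 0) :
    ∫ q in Set.Ioc t₀ t₁ ×ˢ Set.Ioc 0 l, g q.1 q.2 * pt V q.1 q.2
      = - ∫ q in Set.Ioc t₀ t₁ ×ˢ Set.Ioc 0 l, pt g q.1 q.2 * V q.1 q.2 := by
  have c1 : Continuous (fun q : ℝ × ℝ => g q.1 q.2 * pt V q.1 q.2) :=
    (cont2 hg).mul (cont2 (smooth2_pt hV))
  have c2 : Continuous (fun q : ℝ × ℝ => pt g q.1 q.2 * V q.1 q.2) :=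
    (cont2 (smooth2_pt hg)).mul (cont2 hV)
  calc ∫ q in Set.Ioc t₀ t₁ ×ˢ Set.Ioc 0 l, g q.1 q.2 * pt V q.1 q.2
      = ∫ s in (0:ℝ)..l, ∫ t in t₀..t₁, g t s * pt V t s := (conv_st ht hl (f := fun t s => g t s * pt V t s) c1).symm
    _ = ∫ s in (0:ℝ)..l, - ∫ t in t₀..t₁, pt g t s * V t s := by
        refine intervalIntegral.integral_congr fun s _ => ?_
        exact ibp_line (fun τ => hasDerivAt_pt hg τ s) (fun τ => hasDerivAt_pt hV τ s)
          (contT (smooth2_pt hg) s) (contT (smooth2_pt hV) s) (h0 s) (h1 s)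
    _ = - ∫ s in (0:ℝ)..l, ∫ t in t₀..t₁, pt g t s * V t s :=
        intervalIntegral.integral_neg
    _ = - ∫ q in Set.Ioc t₀ t₁ ×ˢ Set.Ioc 0 l, pt g q.1 q.2 * V q.1 q.2 := by
        rw [conv_st ht hl (f := fun t s => pt g t s * V t s) c2]

/-- Positivity step of the fundamental lemma of the calculus of variations. -/
lemma flcv_pos (ht : t₀ < t₁) (hl : (0:ℝ) < l) {E : ℝ × ℝ → ℝ} (hE : Continuous E)
    {q : ℝ × ℝ} (hq : q ∈ Set.Ioo t₀ t₁ ×ˢ Set.Ioo 0 l) (hpos : 0 < E q)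
    (h : ∀ φ : ℝ × ℝ → ℝ, ContDiff ℝ (⊤:ℕ∞) φ →
      tsupport φ ⊆ Set.Ioo t₀ t₁ ×ˢ Set.Ioo 0 l →
      ∫ z in Set.Ioc t₀ t₁ ×ˢ Set.Ioc 0 l, E z * φ z = 0) : False := by
  set U : Set (ℝ × ℝ) := Set.Ioo t₀ t₁ ×ˢ Set.Ioo 0 l with hU
  have hUopen : IsOpen U := isOpen_Ioo.prod isOpen_Ioo
  set W : Set (ℝ × ℝ) := U ∩ E ⁻¹' Set.Ioi (E q / 2) with hW
  have hWopen : IsOpen W := hUopen.inter (isOpen_Ioi.preimage hE)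
  have hqW : q ∈ W := ⟨hq, by simp; linarith⟩
  obtain ⟨r, hr, hball⟩ := Metric.isOpen_iff.mp hWopen q hqW
  have hrIn : (0:ℝ) < r / 4 := by linarith
  have hrOut : r / 4 < r / 2 := by linarith
  let φb : ContDiffBump q := ⟨r / 4, r / 2, hrIn, hrOut⟩
  have hsupp : tsupport (φb : ℝ × ℝ → ℝ) = Metric.closedBall q (r / 2) := φb.tsupport_eq
  have hcbW : Metric.closedBall q (r / 2) ⊆ W :=
    (Metric.closedBall_subset_ball (by linarith)).trans hball
  have hsuppU : tsupport (φb : ℝ × ℝ → ℝ) ⊆ U := by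
    rw [hsupp]; exact hcbW.trans Set.inter_subset_left
  have hzero := h φb (φb.contDiff) hsuppU
  -- the integrand is nonnegative
  have hEW : ∀ z ∈ W, 0 < E z := by
    intro z hz
    have : E z ∈ Set.Ioi (E q / 2) := hz.2
    have : E q / 2 < E z := this
    linarith
  have hnonneg : ∀ z, 0 ≤ E z * φb z := by
    intro z
    rcases eq_or_ne (φb z) 0 with h0 | h0
    · rw [h0, mul_zero]
    · have hzW : z ∈ W := by
        have hz := subset_tsupport (φb : ℝ × ℝ → ℝ)
          (show z ∈ Function.support (φb : ℝ × ℝ → ℝ) from h0)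
        rw [hsupp] at hz
        exact hcbW hz
      exact mul_nonneg (hEW z hzW).le (φb.nonneg' z)
  -- the integral is positive
  set Q : Set (ℝ × ℝ) := Set.Ioc t₀ t₁ ×ˢ Set.Ioc 0 l with hQ
  have hUQ : U ⊆ Q := Set.prod_mono Set.Ioo_subset_Ioc_self Set.Ioo_subset_Ioc_self
  have hint : IntegrableOn (fun z => E z * φb z) Q := intOn (hE.mul φb.continuous)
  have hmeas : MeasurableSet Q := (measurableSet_Ioc.prod measurableSet_Ioc)
  have hpos' : 0 < ∫ z in Q, E z * φb z := by
    rw [setIntegral_pos_iff_support_of_nonneg_ae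
      (Filter.Eventually.of_forall hnonneg : (0 : ℝ × ℝ → ℝ) ≤ᵐ[volume.restrict Q] _) hint]
    have hballsub : Metric.ball q (r / 4) ⊆ Function.support (fun z => E z * φb z) ∩ Q := by
      intro z hz
      have hz2 : z ∈ Metric.closedBall q (r / 4) := Metric.ball_subset_closedBall hz
      have hzW : z ∈ W := hcbW (Metric.closedBall_subset_closedBall (by linarith) hz2)
      constructor
      · have h1 : φb z = 1 := φb.one_of_mem_closedBall hz2
        simp only [Function.mem_support, h1, mul_one]
        exact (hEW z hzW).ne'
      · exact hUQ hzW.1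
    calc (0:ENNReal) < volume (Metric.ball q (r / 4)) := Metric.measure_ball_pos _ _ hrIn
      _ ≤ volume (Function.support (fun z => E z * φb z) ∩ Q) := measure_mono hballsub
  rw [hzero] at hpos'
  exact lt_irrefl _ hpos'

/-- The fundamental lemma of the calculus of variations on the rectangle. -/
lemma flcv (ht : t₀ < t₁) (hl : (0:ℝ) < l) {E : ℝ × ℝ → ℝ} (hE : Continuous E)
    {q : ℝ × ℝ} (hq : q ∈ Set.Ioo t₀ t₁ ×ˢ Set.Ioo 0 l)
    (h : ∀ φ : ℝ × ℝ → ℝ, ContDiff ℝ (⊤:ℕ∞) φ →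
      tsupport φ ⊆ Set.Ioo t₀ t₁ ×ˢ Set.Ioo 0 l →
      ∫ z in Set.Ioc t₀ t₁ ×ˢ Set.Ioc 0 l, E z * φ z = 0) : E q = 0 := by
  by_contra hne
  rcases Ne.lt_or_gt hne with hlt | hgt
  · refine flcv_pos ht hl (E := fun z => -E z) hE.neg hq (by simpa using hlt) ?_
    intro φ hφ hφsupp
    have := h φ hφ hφsupp
    have hneg : ∫ z in Set.Ioc t₀ t₁ ×ˢ Set.Ioc 0 l, -E z * φ z
        = - ∫ z in Set.Ioc t₀ t₁ ×ˢ Set.Ioc 0 l, E z * φ z := by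
      rw [← integral_neg]
      exact integral_congr_ae (Filter.Eventually.of_forall fun z => by ring)
    rw [hneg, this, neg_zero]
  · exact flcv_pos ht hl hE hq hgt h

lemma expand (ρ α β K : ℝ) (p x y θ Vx Vy Vθ : ℝ → ℝ → ℝ)
    (hx : Smooth2 x) (hy : Smooth2 y) (hθ : Smooth2 θ)
    (hVx : Smooth2 Vx) (hVy : Smooth2 Vy) (hVθ : Smooth2 Vθ) (ε t s : ℝ) :
    rodLag ρ α β K p
      (fun t' s' => x t' s' + ε * Vx t' s')
      (fun t' s' => y t' s' + ε * Vy t' s')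
      (fun t' s' => θ t' s' + ε * Vθ t' s') t s
    = rodLag ρ α β K p x y θ t s
      + ε * (ρ * (pt x t s * pt Vx t s) + ρ * (pt y t s * pt Vy t s)
          + α * (pt θ t s * pt Vθ t s) - β * (ps θ t s * ps Vθ t s)
          - K * (ps (ps x) t s * ps (ps Vx) t s) - K * (ps (ps y) t s * ps (ps Vy) t s)
          - (fun t' s' => p t' s' * ps x t' s') t s * ps Vx t s
          - (fun t' s' => p t' s' * ps y t' s') t s * ps Vy t s)
      + ε ^ 2 * (ρ / 2 * ((pt Vx t s) ^ 2 + (pt Vy t s) ^ 2) + α / 2 * (pt Vθ t s) ^ 2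
          - β / 2 * (ps Vθ t s) ^ 2
          - K / 2 * ((ps (ps Vx) t s) ^ 2 + (ps (ps Vy) t s) ^ 2)
          - p t s / 2 * ((ps Vx t s) ^ 2 + (ps Vy t s) ^ 2)) := by
  simp only [rodLag, pt_add_smul hx hVx ε, pt_add_smul hy hVy ε, pt_add_smul hθ hVθ ε,
    ps_add_smul hx hVx ε, ps_add_smul hy hVy ε, ps_add_smul hθ hVθ ε,
    ps_add_smul (smooth2_ps hx) (smooth2_ps hVx) ε,
    ps_add_smul (smooth2_ps hy) (smooth2_ps hVy) ε,
    ps_add_smul (smooth2_ps hθ) (smooth2_ps hVθ) ε]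
  ring

lemma bdries {V : ℝ → ℝ → ℝ}
    (h : tsupport (fun q : ℝ × ℝ => V q.1 q.2) ⊆ Set.Ioo t₀ t₁ ×ˢ Set.Ioo 0 l) :
    (∀ t, V t 0 = 0) ∧ (∀ t, V t l = 0) ∧ (∀ s, V t₀ s = 0) ∧ (∀ s, V t₁ s = 0)
      ∧ (∀ t, ps V t 0 = 0) ∧ (∀ t, ps V t l = 0) := by
  have n0 : ∀ t : ℝ, (t, (0:ℝ)) ∉ tsupport (fun q : ℝ × ℝ => V q.1 q.2) :=
    fun t hm => lt_irrefl (0:ℝ) (h hm).2.1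
  have nl : ∀ t : ℝ, (t, l) ∉ tsupport (fun q : ℝ × ℝ => V q.1 q.2) :=
    fun t hm => lt_irrefl l (h hm).2.2
  have m0 : ∀ s : ℝ, (t₀, s) ∉ tsupport (fun q : ℝ × ℝ => V q.1 q.2) :=
    fun s hm => lt_irrefl t₀ (h hm).1.1
  have m1 : ∀ s : ℝ, (t₁, s) ∉ tsupport (fun q : ℝ × ℝ => V q.1 q.2) :=
    fun s hm => lt_irrefl t₁ (h hm).1.2
  exact ⟨fun t => val_zero (n0 t), fun t => val_zero (nl t), fun s => val_zero (m0 s),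
    fun s => val_zero (m1 s), fun t => ps_zero_of_nmem (n0 t), fun t => ps_zero_of_nmem (nl t)⟩

/-- The key derivative formula for the action. -/
lemma key (ρ α β K : ℝ) (ht : t₀ ≤ t₁) (hl : (0:ℝ) ≤ l)
    (p x y θ Vx Vy Vθ : ℝ → ℝ → ℝ)
    (hp : Smooth2 p) (hx : Smooth2 x) (hy : Smooth2 y) (hθ : Smooth2 θ)
    (hVx : Smooth2 Vx) (hVy : Smooth2 Vy) (hVθ : Smooth2 Vθ)
    (sVx : tsupport (fun q : ℝ × ℝ => Vx q.1 q.2) ⊆ Set.Ioo t₀ t₁ ×ˢ Set.Ioo 0 l)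
    (sVy : tsupport (fun q : ℝ × ℝ => Vy q.1 q.2) ⊆ Set.Ioo t₀ t₁ ×ˢ Set.Ioo 0 l)
    (sVθ : tsupport (fun q : ℝ × ℝ => Vθ q.1 q.2) ⊆ Set.Ioo t₀ t₁ ×ˢ Set.Ioo 0 l) :
    HasDerivAt (fun ε : ℝ =>
        ∫ t in t₀..t₁, ∫ s in (0 : ℝ)..l,
          rodLag ρ α β K p
            (fun t' s' => x t' s' + ε * Vx t' s')
            (fun t' s' => y t' s' + ε * Vy t' s')
            (fun t' s' => θ t' s' + ε * Vθ t' s') t s)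
      (-(∫ q in Set.Ioc t₀ t₁ ×ˢ Set.Ioc 0 l,
          ((ρ * pt (pt x) q.1 q.2 + K * ps (ps (ps (ps x))) q.1 q.2
              - ps (fun t' s' => p t' s' * ps x t' s') q.1 q.2) * Vx q.1 q.2
            + (ρ * pt (pt y) q.1 q.2 + K * ps (ps (ps (ps y))) q.1 q.2
              - ps (fun t' s' => p t' s' * ps y t' s') q.1 q.2) * Vy q.1 q.2
            + (α * pt (pt θ) q.1 q.2 - β * ps (ps θ) q.1 q.2) * Vθ q.1 q.2))) 0 := by
  obtain ⟨bx0, bxl, bxt0, bxt1, bpx0, bpxl⟩ := bdries sVx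
  obtain ⟨by0, byl, byt0, byt1, bpy0, bpyl⟩ := bdries sVy
  obtain ⟨bθ0, bθl, bθt0, bθt1, bpθ0, bpθl⟩ := bdries sVθ
  -- continuity library
  have cptx := cont2 (smooth2_pt hx); have cpty := cont2 (smooth2_pt hy)
  have cptθ := cont2 (smooth2_pt hθ)
  have cptVx := cont2 (smooth2_pt hVx); have cptVy := cont2 (smooth2_pt hVy)
  have cptVθ := cont2 (smooth2_pt hVθ)
  have cpsθ := cont2 (smooth2_ps hθ); have cpsVθ := cont2 (smooth2_ps hVθ)
  have cpsx := cont2 (smooth2_ps hx); have cpsy := cont2 (smooth2_ps hy)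
  have cpsVx := cont2 (smooth2_ps hVx); have cpsVy := cont2 (smooth2_ps hVy)
  have cps2x := cont2 (smooth2_ps (smooth2_ps hx))
  have cps2y := cont2 (smooth2_ps (smooth2_ps hy))
  have cps2Vx := cont2 (smooth2_ps (smooth2_ps hVx))
  have cps2Vy := cont2 (smooth2_ps (smooth2_ps hVy))
  have cp := cont2 hp
  have cVx := cont2 hVx; have cVy := cont2 hVy; have cVθ := cont2 hVθ
  -- the three coefficient functions
  set L0 : ℝ → ℝ → ℝ := rodLag ρ α β K p x y θ with hL0
  set A : ℝ → ℝ → ℝ := fun t s =>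
      ρ * (pt x t s * pt Vx t s) + ρ * (pt y t s * pt Vy t s)
        + α * (pt θ t s * pt Vθ t s) - β * (ps θ t s * ps Vθ t s)
        - K * (ps (ps x) t s * ps (ps Vx) t s) - K * (ps (ps y) t s * ps (ps Vy) t s)
        - (fun t' s' => p t' s' * ps x t' s') t s * ps Vx t s
        - (fun t' s' => p t' s' * ps y t' s') t s * ps Vy t s with hA
  set B : ℝ → ℝ → ℝ := fun t s =>
      ρ / 2 * ((pt Vx t s) ^ 2 + (pt Vy t s) ^ 2) + α / 2 * (pt Vθ t s) ^ 2
        - β / 2 * (ps Vθ t s) ^ 2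
        - K / 2 * ((ps (ps Vx) t s) ^ 2 + (ps (ps Vy) t s) ^ 2)
        - p t s / 2 * ((ps Vx t s) ^ 2 + (ps Vy t s) ^ 2) with hB
  have cL0 : Continuous (fun q : ℝ × ℝ => L0 q.1 q.2) := by
    rw [hL0]; unfold rodLag; fun_prop
  have cA : Continuous (fun q : ℝ × ℝ => A q.1 q.2) := by rw [hA]; fun_prop
  have cB : Continuous (fun q : ℝ × ℝ => B q.1 q.2) := by rw [hB]; fun_prop
  -- smoothness of the p-products
  have hpx : Smooth2 (fun t' s' => p t' s' * ps x t' s') := smooth2_mul hp (smooth2_ps hx)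
  have hpy : Smooth2 (fun t' s' => p t' s' * ps y t' s') := smooth2_mul hp (smooth2_ps hy)
  have cpsPx := cont2 (smooth2_ps hpx)
  have cpsPy := cont2 (smooth2_ps hpy)
  have cPx := cont2 hpx; have cPy := cont2 hpy
  have cpt2x := cont2 (smooth2_pt (smooth2_pt hx))
  have cpt2y := cont2 (smooth2_pt (smooth2_pt hy))
  have cpt2θ := cont2 (smooth2_pt (smooth2_pt hθ))
  have cps2θ := cont2 (smooth2_ps (smooth2_ps hθ))
  have cps4x := cont2 (smooth2_ps (smooth2_ps (smooth2_ps (smooth2_ps hx))))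
  have cps4y := cont2 (smooth2_ps (smooth2_ps (smooth2_ps (smooth2_ps hy))))
  -- polynomial representation of the action
  have hSrep : ∀ ε : ℝ,
      (∫ t in t₀..t₁, ∫ s in (0 : ℝ)..l,
          rodLag ρ α β K p
            (fun t' s' => x t' s' + ε * Vx t' s')
            (fun t' s' => y t' s' + ε * Vy t' s')
            (fun t' s' => θ t' s' + ε * Vθ t' s') t s)
      = (∫ q in Set.Ioc t₀ t₁ ×ˢ Set.Ioc 0 l, L0 q.1 q.2)
        + ε * (∫ q in Set.Ioc t₀ t₁ ×ˢ Set.Ioc 0 l, A q.1 q.2)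
        + ε ^ 2 * (∫ q in Set.Ioc t₀ t₁ ×ˢ Set.Ioc 0 l, B q.1 q.2) := by
    intro ε
    have step1 : (∫ t in t₀..t₁, ∫ s in (0 : ℝ)..l,
          rodLag ρ α β K p
            (fun t' s' => x t' s' + ε * Vx t' s')
            (fun t' s' => y t' s' + ε * Vy t' s')
            (fun t' s' => θ t' s' + ε * Vθ t' s') t s)
        = ∫ t in t₀..t₁, ∫ s in (0 : ℝ)..l, (L0 t s + ε * A t s + ε ^ 2 * B t s) := by
      refine intervalIntegral.integral_congr fun t _ => ?_
      refine intervalIntegral.integral_congr fun s _ => ?_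
      simp only [hA, hB, hL0]
      simpa using expand ρ α β K p x y θ Vx Vy Vθ hx hy hθ hVx hVy hVθ ε t s
    rw [step1,
      conv_ts ht hl (f := fun t s => L0 t s + ε * A t s + ε ^ 2 * B t s) (by fun_prop)]
    have hs1 : ∫ q in Set.Ioc t₀ t₁ ×ˢ Set.Ioc 0 l,
        (L0 q.1 q.2 + ε * A q.1 q.2 + ε ^ 2 * B q.1 q.2)
        = (∫ q in Set.Ioc t₀ t₁ ×ˢ Set.Ioc 0 l, (L0 q.1 q.2 + ε * A q.1 q.2))
          + ∫ q in Set.Ioc t₀ t₁ ×ˢ Set.Ioc 0 l, ε ^ 2 * B q.1 q.2 :=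
      integral_add ((intOn cL0).add ((intOn cA).const_mul ε)) ((intOn cB).const_mul (ε ^ 2))
    have hs2 : ∫ q in Set.Ioc t₀ t₁ ×ˢ Set.Ioc 0 l, (L0 q.1 q.2 + ε * A q.1 q.2)
        = (∫ q in Set.Ioc t₀ t₁ ×ˢ Set.Ioc 0 l, L0 q.1 q.2)
          + ∫ q in Set.Ioc t₀ t₁ ×ˢ Set.Ioc 0 l, ε * A q.1 q.2 :=
      integral_add (intOn cL0) ((intOn cA).const_mul ε)
    have hs3 : ∫ q in Set.Ioc t₀ t₁ ×ˢ Set.Ioc 0 l, ε * A q.1 q.2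
        = ε * ∫ q in Set.Ioc t₀ t₁ ×ˢ Set.Ioc 0 l, A q.1 q.2 := integral_const_mul ε _
    have hs4 : ∫ q in Set.Ioc t₀ t₁ ×ˢ Set.Ioc 0 l, ε ^ 2 * B q.1 q.2
        = ε ^ 2 * ∫ q in Set.Ioc t₀ t₁ ×ˢ Set.Ioc 0 l, B q.1 q.2 := integral_const_mul (ε ^ 2) _
    rw [hs1, hs2, hs3, hs4]
  -- the IBP identities
  have e1x := ibp_t ht hl (smooth2_pt hx) hVx bxt0 bxt1
  have e1y := ibp_t ht hl (smooth2_pt hy) hVy byt0 byt1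
  have e1θ := ibp_t ht hl (smooth2_pt hθ) hVθ bθt0 bθt1
  have e2θ := ibp_s ht hl (smooth2_ps hθ) hVθ bθ0 bθl
  have e3x : (∫ q in Set.Ioc t₀ t₁ ×ˢ Set.Ioc 0 l,
        ps (ps x) q.1 q.2 * ps (ps Vx) q.1 q.2)
      = ∫ q in Set.Ioc t₀ t₁ ×ˢ Set.Ioc 0 l,
        ps (ps (ps (ps x))) q.1 q.2 * Vx q.1 q.2 := by
    rw [ibp_s ht hl (smooth2_ps (smooth2_ps hx)) (smooth2_ps hVx) bpx0 bpxl,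
      ibp_s ht hl (smooth2_ps (smooth2_ps (smooth2_ps hx))) hVx bx0 bxl, neg_neg]
  have e3y : (∫ q in Set.Ioc t₀ t₁ ×ˢ Set.Ioc 0 l,
        ps (ps y) q.1 q.2 * ps (ps Vy) q.1 q.2)
      = ∫ q in Set.Ioc t₀ t₁ ×ˢ Set.Ioc 0 l,
        ps (ps (ps (ps y))) q.1 q.2 * Vy q.1 q.2 := by
    rw [ibp_s ht hl (smooth2_ps (smooth2_ps hy)) (smooth2_ps hVy) bpy0 bpyl,
      ibp_s ht hl (smooth2_ps (smooth2_ps (smooth2_ps hy))) hVy by0 byl, neg_neg]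
  have e4x := ibp_s ht hl hpx hVx bx0 bxl
  have e4y := ibp_s ht hl hpy hVy by0 byl
  -- value of the first-order coefficient
  have hAval : (∫ q in Set.Ioc t₀ t₁ ×ˢ Set.Ioc 0 l, A q.1 q.2)
      = -(∫ q in Set.Ioc t₀ t₁ ×ˢ Set.Ioc 0 l,
          ((ρ * pt (pt x) q.1 q.2 + K * ps (ps (ps (ps x))) q.1 q.2
              - ps (fun t' s' => p t' s' * ps x t' s') q.1 q.2) * Vx q.1 q.2
            + (ρ * pt (pt y) q.1 q.2 + K * ps (ps (ps (ps y))) q.1 q.2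
              - ps (fun t' s' => p t' s' * ps y t' s') q.1 q.2) * Vy q.1 q.2
            + (α * pt (pt θ) q.1 q.2 - β * ps (ps θ) q.1 q.2) * Vθ q.1 q.2)) := by
    have hA0 : (∫ q in Set.Ioc t₀ t₁ ×ˢ Set.Ioc 0 l, A q.1 q.2) = ∫ q in Set.Ioc t₀ t₁ ×ˢ Set.Ioc 0 l, (ρ * (pt x q.1 q.2 * pt Vx q.1 q.2) + ρ * (pt y q.1 q.2 * pt Vy q.1 q.2) + α * (pt θ q.1 q.2 * pt Vθ q.1 q.2) - β * (ps θ q.1 q.2 * ps Vθ q.1 q.2) - K * (ps (ps x) q.1 q.2 * ps (ps Vx) q.1 q.2) - K * (ps (ps y) q.1 q.2 * ps (ps Vy) q.1 q.2) - p q.1 q.2 * ps x q.1 q.2 * ps Vx q.1 q.2 - p q.1 q.2 * ps y q.1 q.2 * ps Vy q.1 q.2) := by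
      simp only [hA]
    have hsp8 : (∫ q in Set.Ioc t₀ t₁ ×ˢ Set.Ioc 0 l, (ρ * (pt x q.1 q.2 * pt Vx q.1 q.2) + ρ * (pt y q.1 q.2 * pt Vy q.1 q.2) + α * (pt θ q.1 q.2 * pt Vθ q.1 q.2) - β * (ps θ q.1 q.2 * ps Vθ q.1 q.2) - K * (ps (ps x) q.1 q.2 * ps (ps Vx) q.1 q.2) - K * (ps (ps y) q.1 q.2 * ps (ps Vy) q.1 q.2) - p q.1 q.2 * ps x q.1 q.2 * ps Vx q.1 q.2 - p q.1 q.2 * ps y q.1 q.2 * ps Vy q.1 q.2))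
        = (∫ q in Set.Ioc t₀ t₁ ×ˢ Set.Ioc 0 l, (ρ * (pt x q.1 q.2 * pt Vx q.1 q.2) + ρ * (pt y q.1 q.2 * pt Vy q.1 q.2) + α * (pt θ q.1 q.2 * pt Vθ q.1 q.2) - β * (ps θ q.1 q.2 * ps Vθ q.1 q.2) - K * (ps (ps x) q.1 q.2 * ps (ps Vx) q.1 q.2) - K * (ps (ps y) q.1 q.2 * ps (ps Vy) q.1 q.2) - p q.1 q.2 * ps x q.1 q.2 * ps Vx q.1 q.2)) - (∫ q in Set.Ioc t₀ t₁ ×ˢ Set.Ioc 0 l, p q.1 q.2 * ps y q.1 q.2 * ps Vy q.1 q.2) :=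
      integral_sub (intOn (by fun_prop)) (intOn (by fun_prop))
    have hsp7 : (∫ q in Set.Ioc t₀ t₁ ×ˢ Set.Ioc 0 l, (ρ * (pt x q.1 q.2 * pt Vx q.1 q.2) + ρ * (pt y q.1 q.2 * pt Vy q.1 q.2) + α * (pt θ q.1 q.2 * pt Vθ q.1 q.2) - β * (ps θ q.1 q.2 * ps Vθ q.1 q.2) - K * (ps (ps x) q.1 q.2 * ps (ps Vx) q.1 q.2) - K * (ps (ps y) q.1 q.2 * ps (ps Vy) q.1 q.2) - p q.1 q.2 * ps x q.1 q.2 * ps Vx q.1 q.2))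
        = (∫ q in Set.Ioc t₀ t₁ ×ˢ Set.Ioc 0 l, (ρ * (pt x q.1 q.2 * pt Vx q.1 q.2) + ρ * (pt y q.1 q.2 * pt Vy q.1 q.2) + α * (pt θ q.1 q.2 * pt Vθ q.1 q.2) - β * (ps θ q.1 q.2 * ps Vθ q.1 q.2) - K * (ps (ps x) q.1 q.2 * ps (ps Vx) q.1 q.2) - K * (ps (ps y) q.1 q.2 * ps (ps Vy) q.1 q.2))) - (∫ q in Set.Ioc t₀ t₁ ×ˢ Set.Ioc 0 l, p q.1 q.2 * ps x q.1 q.2 * ps Vx q.1 q.2) :=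
      integral_sub (intOn (by fun_prop)) (intOn (by fun_prop))
    have hsp6 : (∫ q in Set.Ioc t₀ t₁ ×ˢ Set.Ioc 0 l, (ρ * (pt x q.1 q.2 * pt Vx q.1 q.2) + ρ * (pt y q.1 q.2 * pt Vy q.1 q.2) + α * (pt θ q.1 q.2 * pt Vθ q.1 q.2) - β * (ps θ q.1 q.2 * ps Vθ q.1 q.2) - K * (ps (ps x) q.1 q.2 * ps (ps Vx) q.1 q.2) - K * (ps (ps y) q.1 q.2 * ps (ps Vy) q.1 q.2)))
        = (∫ q in Set.Ioc t₀ t₁ ×ˢ Set.Ioc 0 l, (ρ * (pt x q.1 q.2 * pt Vx q.1 q.2) + ρ * (pt y q.1 q.2 * pt Vy q.1 q.2) + α * (pt θ q.1 q.2 * pt Vθ q.1 q.2) - β * (ps θ q.1 q.2 * ps Vθ q.1 q.2) - K * (ps (ps x) q.1 q.2 * ps (ps Vx) q.1 q.2))) - (∫ q in Set.Ioc t₀ t₁ ×ˢ Set.Ioc 0 l, K * (ps (ps y) q.1 q.2 * ps (ps Vy) q.1 q.2)) :=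
      integral_sub (intOn (by fun_prop)) (intOn (by fun_prop))
    have hsp5 : (∫ q in Set.Ioc t₀ t₁ ×ˢ Set.Ioc 0 l, (ρ * (pt x q.1 q.2 * pt Vx q.1 q.2) + ρ * (pt y q.1 q.2 * pt Vy q.1 q.2) + α * (pt θ q.1 q.2 * pt Vθ q.1 q.2) - β * (ps θ q.1 q.2 * ps Vθ q.1 q.2) - K * (ps (ps x) q.1 q.2 * ps (ps Vx) q.1 q.2)))
        = (∫ q in Set.Ioc t₀ t₁ ×ˢ Set.Ioc 0 l, (ρ * (pt x q.1 q.2 * pt Vx q.1 q.2) + ρ * (pt y q.1 q.2 * pt Vy q.1 q.2) + α * (pt θ q.1 q.2 * pt Vθ q.1 q.2) - β * (ps θ q.1 q.2 * ps Vθ q.1 q.2))) - (∫ q in Set.Ioc t₀ t₁ ×ˢ Set.Ioc 0 l, K * (ps (ps x) q.1 q.2 * ps (ps Vx) q.1 q.2)) :=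
      integral_sub (intOn (by fun_prop)) (intOn (by fun_prop))
    have hsp4 : (∫ q in Set.Ioc t₀ t₁ ×ˢ Set.Ioc 0 l, (ρ * (pt x q.1 q.2 * pt Vx q.1 q.2) + ρ * (pt y q.1 q.2 * pt Vy q.1 q.2) + α * (pt θ q.1 q.2 * pt Vθ q.1 q.2) - β * (ps θ q.1 q.2 * ps Vθ q.1 q.2)))
        = (∫ q in Set.Ioc t₀ t₁ ×ˢ Set.Ioc 0 l, (ρ * (pt x q.1 q.2 * pt Vx q.1 q.2) + ρ * (pt y q.1 q.2 * pt Vy q.1 q.2) + α * (pt θ q.1 q.2 * pt Vθ q.1 q.2))) - (∫ q in Set.Ioc t₀ t₁ ×ˢ Set.Ioc 0 l, β * (ps θ q.1 q.2 * ps Vθ q.1 q.2)) :=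
      integral_sub (intOn (by fun_prop)) (intOn (by fun_prop))
    have hsp3 : (∫ q in Set.Ioc t₀ t₁ ×ˢ Set.Ioc 0 l, (ρ * (pt x q.1 q.2 * pt Vx q.1 q.2) + ρ * (pt y q.1 q.2 * pt Vy q.1 q.2) + α * (pt θ q.1 q.2 * pt Vθ q.1 q.2)))
        = (∫ q in Set.Ioc t₀ t₁ ×ˢ Set.Ioc 0 l, (ρ * (pt x q.1 q.2 * pt Vx q.1 q.2) + ρ * (pt y q.1 q.2 * pt Vy q.1 q.2))) + (∫ q in Set.Ioc t₀ t₁ ×ˢ Set.Ioc 0 l, α * (pt θ q.1 q.2 * pt Vθ q.1 q.2)) :=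
      integral_add (intOn (by fun_prop)) (intOn (by fun_prop))
    have hsp2 : (∫ q in Set.Ioc t₀ t₁ ×ˢ Set.Ioc 0 l, (ρ * (pt x q.1 q.2 * pt Vx q.1 q.2) + ρ * (pt y q.1 q.2 * pt Vy q.1 q.2)))
        = (∫ q in Set.Ioc t₀ t₁ ×ˢ Set.Ioc 0 l, (ρ * (pt x q.1 q.2 * pt Vx q.1 q.2))) + (∫ q in Set.Ioc t₀ t₁ ×ˢ Set.Ioc 0 l, ρ * (pt y q.1 q.2 * pt Vy q.1 q.2)) :=
      integral_add (intOn (by fun_prop)) (intOn (by fun_prop))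
    have hm1 : (∫ q in Set.Ioc t₀ t₁ ×ˢ Set.Ioc 0 l, ρ * (pt x q.1 q.2 * pt Vx q.1 q.2)) = ρ * (∫ q in Set.Ioc t₀ t₁ ×ˢ Set.Ioc 0 l, pt x q.1 q.2 * pt Vx q.1 q.2) :=
      integral_const_mul ρ _
    have hm2 : (∫ q in Set.Ioc t₀ t₁ ×ˢ Set.Ioc 0 l, ρ * (pt y q.1 q.2 * pt Vy q.1 q.2)) = ρ * (∫ q in Set.Ioc t₀ t₁ ×ˢ Set.Ioc 0 l, pt y q.1 q.2 * pt Vy q.1 q.2) :=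
      integral_const_mul ρ _
    have hm3 : (∫ q in Set.Ioc t₀ t₁ ×ˢ Set.Ioc 0 l, α * (pt θ q.1 q.2 * pt Vθ q.1 q.2)) = α * (∫ q in Set.Ioc t₀ t₁ ×ˢ Set.Ioc 0 l, pt θ q.1 q.2 * pt Vθ q.1 q.2) :=
      integral_const_mul α _
    have hm4 : (∫ q in Set.Ioc t₀ t₁ ×ˢ Set.Ioc 0 l, β * (ps θ q.1 q.2 * ps Vθ q.1 q.2)) = β * (∫ q in Set.Ioc t₀ t₁ ×ˢ Set.Ioc 0 l, ps θ q.1 q.2 * ps Vθ q.1 q.2) :=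
      integral_const_mul β _
    have hm5 : (∫ q in Set.Ioc t₀ t₁ ×ˢ Set.Ioc 0 l, K * (ps (ps x) q.1 q.2 * ps (ps Vx) q.1 q.2)) = K * (∫ q in Set.Ioc t₀ t₁ ×ˢ Set.Ioc 0 l, ps (ps x) q.1 q.2 * ps (ps Vx) q.1 q.2) :=
      integral_const_mul K _
    have hm6 : (∫ q in Set.Ioc t₀ t₁ ×ˢ Set.Ioc 0 l, K * (ps (ps y) q.1 q.2 * ps (ps Vy) q.1 q.2)) = K * (∫ q in Set.Ioc t₀ t₁ ×ˢ Set.Ioc 0 l, ps (ps y) q.1 q.2 * ps (ps Vy) q.1 q.2) :=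
      integral_const_mul K _
    have e4x' : (∫ q in Set.Ioc t₀ t₁ ×ˢ Set.Ioc 0 l, p q.1 q.2 * ps x q.1 q.2 * ps Vx q.1 q.2)
        = - (∫ q in Set.Ioc t₀ t₁ ×ˢ Set.Ioc 0 l, ps (fun t' s' => p t' s' * ps x t' s') q.1 q.2 * Vx q.1 q.2) := e4x
    have e4y' : (∫ q in Set.Ioc t₀ t₁ ×ˢ Set.Ioc 0 l, p q.1 q.2 * ps y q.1 q.2 * ps Vy q.1 q.2)
        = - (∫ q in Set.Ioc t₀ t₁ ×ˢ Set.Ioc 0 l, ps (fun t' s' => p t' s' * ps y t' s') q.1 q.2 * Vy q.1 q.2) := e4y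
    have hR0 : (∫ q in Set.Ioc t₀ t₁ ×ˢ Set.Ioc 0 l, ((ρ * pt (pt x) q.1 q.2 + K * ps (ps (ps (ps x))) q.1 q.2 - ps (fun t' s' => p t' s' * ps x t' s') q.1 q.2) * Vx q.1 q.2 + (ρ * pt (pt y) q.1 q.2 + K * ps (ps (ps (ps y))) q.1 q.2 - ps (fun t' s' => p t' s' * ps y t' s') q.1 q.2) * Vy q.1 q.2 + (α * pt (pt θ) q.1 q.2 - β * ps (ps θ) q.1 q.2) * Vθ q.1 q.2))
        = ∫ q in Set.Ioc t₀ t₁ ×ˢ Set.Ioc 0 l, (ρ * (pt (pt x) q.1 q.2 * Vx q.1 q.2) + K * (ps (ps (ps (ps x))) q.1 q.2 * Vx q.1 q.2) - ps (fun t' s' => p t' s' * ps x t' s') q.1 q.2 * Vx q.1 q.2 + ρ * (pt (pt y) q.1 q.2 * Vy q.1 q.2) + K * (ps (ps (ps (ps y))) q.1 q.2 * Vy q.1 q.2) - ps (fun t' s' => p t' s' * ps y t' s') q.1 q.2 * Vy q.1 q.2 + α * (pt (pt θ) q.1 q.2 * Vθ q.1 q.2) - β * (ps (ps θ) q.1 q.2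 * Vθ q.1 q.2)) :=
      integral_congr_ae (Filter.Eventually.of_forall fun q => by ring)
    have hu8 : (∫ q in Set.Ioc t₀ t₁ ×ˢ Set.Ioc 0 l, (ρ * (pt (pt x) q.1 q.2 * Vx q.1 q.2) + K * (ps (ps (ps (ps x))) q.1 q.2 * Vx q.1 q.2) - ps (fun t' s' => p t' s' * ps x t' s') q.1 q.2 * Vx q.1 q.2 + ρ * (pt (pt y) q.1 q.2 * Vy q.1 q.2) + K * (ps (ps (ps (ps y))) q.1 q.2 * Vy q.1 q.2) - ps (fun t' s' => p t' s' * ps y t' s') q.1 q.2 * Vy q.1 q.2 + α * (pt (pt θ) q.1 q.2 * Vθ q.1 q.2) - β * (ps (ps θ) q.1 q.2 * Vθ q.1 q.2)))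
        = (∫ q in Set.Ioc t₀ t₁ ×ˢ Set.Ioc 0 l, (ρ * (pt (pt x) q.1 q.2 * Vx q.1 q.2) + K * (ps (ps (ps (ps x))) q.1 q.2 * Vx q.1 q.2) - ps (fun t' s' => p t' s' * ps x t' s') q.1 q.2 * Vx q.1 q.2 + ρ * (pt (pt y) q.1 q.2 * Vy q.1 q.2) + K * (ps (ps (ps (ps y))) q.1 q.2 * Vy q.1 q.2) - ps (fun t' s' => p t' s' * ps y t' s') q.1 q.2 * Vy q.1 q.2 + α * (pt (pt θ) q.1 q.2 * Vθ q.1 q.2))) - (∫ q in Set.Ioc t₀ t₁ ×ˢ Set.Ioc 0 l, β * (ps (ps θ) q.1 q.2 * Vθ q.1 q.2)) :=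
      integral_sub (intOn (by fun_prop)) (intOn (by fun_prop))
    have hu7 : (∫ q in Set.Ioc t₀ t₁ ×ˢ Set.Ioc 0 l, (ρ * (pt (pt x) q.1 q.2 * Vx q.1 q.2) + K * (ps (ps (ps (ps x))) q.1 q.2 * Vx q.1 q.2) - ps (fun t' s' => p t' s' * ps x t' s') q.1 q.2 * Vx q.1 q.2 + ρ * (pt (pt y) q.1 q.2 * Vy q.1 q.2) + K * (ps (ps (ps (ps y))) q.1 q.2 * Vy q.1 q.2) - ps (fun t' s' => p t' s' * ps y t' s') q.1 q.2 * Vy q.1 q.2 + α * (pt (pt θ) q.1 q.2 * Vθ q.1 q.2)))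
        = (∫ q in Set.Ioc t₀ t₁ ×ˢ Set.Ioc 0 l, (ρ * (pt (pt x) q.1 q.2 * Vx q.1 q.2) + K * (ps (ps (ps (ps x))) q.1 q.2 * Vx q.1 q.2) - ps (fun t' s' => p t' s' * ps x t' s') q.1 q.2 * Vx q.1 q.2 + ρ * (pt (pt y) q.1 q.2 * Vy q.1 q.2) + K * (ps (ps (ps (ps y))) q.1 q.2 * Vy q.1 q.2) - ps (fun t' s' => p t' s' * ps y t' s') q.1 q.2 * Vy q.1 q.2)) + (∫ q in Set.Ioc t₀ t₁ ×ˢ Set.Ioc 0 l, α * (pt (pt θ) q.1 q.2 * Vθ q.1 q.2)) :=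
      integral_add (intOn (by fun_prop)) (intOn (by fun_prop))
    have hu6 : (∫ q in Set.Ioc t₀ t₁ ×ˢ Set.Ioc 0 l, (ρ * (pt (pt x) q.1 q.2 * Vx q.1 q.2) + K * (ps (ps (ps (ps x))) q.1 q.2 * Vx q.1 q.2) - ps (fun t' s' => p t' s' * ps x t' s') q.1 q.2 * Vx q.1 q.2 + ρ * (pt (pt y) q.1 q.2 * Vy q.1 q.2) + K * (ps (ps (ps (ps y))) q.1 q.2 * Vy q.1 q.2) - ps (fun t' s' => p t' s' * ps y t' s') q.1 q.2 * Vy q.1 q.2))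
        = (∫ q in Set.Ioc t₀ t₁ ×ˢ Set.Ioc 0 l, (ρ * (pt (pt x) q.1 q.2 * Vx q.1 q.2) + K * (ps (ps (ps (ps x))) q.1 q.2 * Vx q.1 q.2) - ps (fun t' s' => p t' s' * ps x t' s') q.1 q.2 * Vx q.1 q.2 + ρ * (pt (pt y) q.1 q.2 * Vy q.1 q.2) + K * (ps (ps (ps (ps y))) q.1 q.2 * Vy q.1 q.2))) - (∫ q in Set.Ioc t₀ t₁ ×ˢ Set.Ioc 0 l, ps (fun t' s' => p t' s' * ps y t' s') q.1 q.2 * Vy q.1 q.2) :=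
      integral_sub (intOn (by fun_prop)) (intOn (by fun_prop))
    have hu5 : (∫ q in Set.Ioc t₀ t₁ ×ˢ Set.Ioc 0 l, (ρ * (pt (pt x) q.1 q.2 * Vx q.1 q.2) + K * (ps (ps (ps (ps x))) q.1 q.2 * Vx q.1 q.2) - ps (fun t' s' => p t' s' * ps x t' s') q.1 q.2 * Vx q.1 q.2 + ρ * (pt (pt y) q.1 q.2 * Vy q.1 q.2) + K * (ps (ps (ps (ps y))) q.1 q.2 * Vy q.1 q.2)))
        = (∫ q in Set.Ioc t₀ t₁ ×ˢ Set.Ioc 0 l, (ρ * (pt (pt x) q.1 q.2 * Vx q.1 q.2) + K * (ps (ps (ps (ps x))) q.1 q.2 * Vx q.1 q.2) - ps (fun t' s' => p t' s' * ps x t' s') q.1 q.2 * Vx q.1 q.2 + ρ * (pt (pt y) q.1 q.2 * Vy q.1 q.2))) + (∫ q in Set.Ioc t₀ t₁ ×ˢ Set.Ioc 0 l, K * (ps (ps (ps (ps y))) q.1 q.2 * Vy q.1 q.2)) :=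
      integral_add (intOn (by fun_prop)) (intOn (by fun_prop))
    have hu4 : (∫ q in Set.Ioc t₀ t₁ ×ˢ Set.Ioc 0 l, (ρ * (pt (pt x) q.1 q.2 * Vx q.1 q.2) + K * (ps (ps (ps (ps x))) q.1 q.2 * Vx q.1 q.2) - ps (fun t' s' => p t' s' * ps x t' s') q.1 q.2 * Vx q.1 q.2 + ρ * (pt (pt y) q.1 q.2 * Vy q.1 q.2)))
        = (∫ q in Set.Ioc t₀ t₁ ×ˢ Set.Ioc 0 l, (ρ * (pt (pt x) q.1 q.2 * Vx q.1 q.2) + K * (ps (ps (ps (ps x))) q.1 q.2 * Vx q.1 q.2) - ps (fun t' s' => p t' s' * ps x t' s') q.1 q.2 * Vx q.1 q.2)) + (∫ q in Set.Ioc t₀ t₁ ×ˢ Set.Ioc 0 l, ρ * (pt (pt y) q.1 q.2 * Vy q.1 q.2)) :=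
      integral_add (intOn (by fun_prop)) (intOn (by fun_prop))
    have hu3 : (∫ q in Set.Ioc t₀ t₁ ×ˢ Set.Ioc 0 l, (ρ * (pt (pt x) q.1 q.2 * Vx q.1 q.2) + K * (ps (ps (ps (ps x))) q.1 q.2 * Vx q.1 q.2) - ps (fun t' s' => p t' s' * ps x t' s') q.1 q.2 * Vx q.1 q.2))
        = (∫ q in Set.Ioc t₀ t₁ ×ˢ Set.Ioc 0 l, (ρ * (pt (pt x) q.1 q.2 * Vx q.1 q.2) + K * (ps (ps (ps (ps x))) q.1 q.2 * Vx q.1 q.2))) - (∫ q in Set.Ioc t₀ t₁ ×ˢ Set.Ioc 0 l, ps (fun t' s' => p t' s' * ps x t' s') q.1 q.2 * Vx q.1 q.2) :=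
      integral_sub (intOn (by fun_prop)) (intOn (by fun_prop))
    have hu2 : (∫ q in Set.Ioc t₀ t₁ ×ˢ Set.Ioc 0 l, (ρ * (pt (pt x) q.1 q.2 * Vx q.1 q.2) + K * (ps (ps (ps (ps x))) q.1 q.2 * Vx q.1 q.2)))
        = (∫ q in Set.Ioc t₀ t₁ ×ˢ Set.Ioc 0 l, (ρ * (pt (pt x) q.1 q.2 * Vx q.1 q.2))) + (∫ q in Set.Ioc t₀ t₁ ×ˢ Set.Ioc 0 l, K * (ps (ps (ps (ps x))) q.1 q.2 * Vx q.1 q.2)) :=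
      integral_add (intOn (by fun_prop)) (intOn (by fun_prop))
    have hn1 : (∫ q in Set.Ioc t₀ t₁ ×ˢ Set.Ioc 0 l, ρ * (pt (pt x) q.1 q.2 * Vx q.1 q.2)) = ρ * (∫ q in Set.Ioc t₀ t₁ ×ˢ Set.Ioc 0 l, pt (pt x) q.1 q.2 * Vx q.1 q.2) :=
      integral_const_mul ρ _
    have hn2 : (∫ q in Set.Ioc t₀ t₁ ×ˢ Set.Ioc 0 l, K * (ps (ps (ps (ps x))) q.1 q.2 * Vx q.1 q.2)) = K * (∫ q in Set.Ioc t₀ t₁ ×ˢ Set.Ioc 0 l, ps (ps (ps (ps x))) q.1 q.2 * Vx q.1 q.2) :=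
      integral_const_mul K _
    have hn4 : (∫ q in Set.Ioc t₀ t₁ ×ˢ Set.Ioc 0 l, ρ * (pt (pt y) q.1 q.2 * Vy q.1 q.2)) = ρ * (∫ q in Set.Ioc t₀ t₁ ×ˢ Set.Ioc 0 l, pt (pt y) q.1 q.2 * Vy q.1 q.2) :=
      integral_const_mul ρ _
    have hn5 : (∫ q in Set.Ioc t₀ t₁ ×ˢ Set.Ioc 0 l, K * (ps (ps (ps (ps y))) q.1 q.2 * Vy q.1 q.2)) = K * (∫ q in Set.Ioc t₀ t₁ ×ˢ Set.Ioc 0 l, ps (ps (ps (ps y))) q.1 q.2 * Vy q.1 q.2) :=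
      integral_const_mul K _
    have hn7 : (∫ q in Set.Ioc t₀ t₁ ×ˢ Set.Ioc 0 l, α * (pt (pt θ) q.1 q.2 * Vθ q.1 q.2)) = α * (∫ q in Set.Ioc t₀ t₁ ×ˢ Set.Ioc 0 l, pt (pt θ) q.1 q.2 * Vθ q.1 q.2) :=
      integral_const_mul α _
    have hn8 : (∫ q in Set.Ioc t₀ t₁ ×ˢ Set.Ioc 0 l, β * (ps (ps θ) q.1 q.2 * Vθ q.1 q.2)) = β * (∫ q in Set.Ioc t₀ t₁ ×ˢ Set.Ioc 0 l, ps (ps θ) q.1 q.2 * Vθ q.1 q.2) :=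
      integral_const_mul β _
    rw [hA0, hsp8, hsp7, hsp6, hsp5, hsp4, hsp3, hsp2, hm1, hm2, hm3, hm4, hm5, hm6,
      e1x, e1y, e1θ, e2θ, e3x, e3y, e4x', e4y',
      hR0, hu8, hu7, hu6, hu5, hu4, hu3, hu2, hn1, hn2, hn4, hn5, hn7, hn8]
    ring
  have hfun : (fun ε : ℝ =>
      ∫ t in t₀..t₁, ∫ s in (0 : ℝ)..l,
        rodLag ρ α β K p
          (fun t' s' => x t' s' + ε * Vx t' s')
          (fun t' s' => y t' s' + ε * Vy t' s')
          (fun t' s' => θ t' s' + ε * Vθ t' s') t s)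
      = fun ε : ℝ => (∫ q in Set.Ioc t₀ t₁ ×ˢ Set.Ioc 0 l, L0 q.1 q.2)
        + ε * (∫ q in Set.Ioc t₀ t₁ ×ˢ Set.Ioc 0 l, A q.1 q.2)
        + ε ^ 2 * (∫ q in Set.Ioc t₀ t₁ ×ˢ Set.Ioc 0 l, B q.1 q.2) := funext hSrep
  rw [hfun, ← hAval]
  have h1 : HasDerivAt (fun ε : ℝ => ε * (∫ q in Set.Ioc t₀ t₁ ×ˢ Set.Ioc 0 l, A q.1 q.2))
      (∫ q in Set.Ioc t₀ t₁ ×ˢ Set.Ioc 0 l, A q.1 q.2) 0 := by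
    simpa using (hasDerivAt_id (0:ℝ)).mul_const (∫ q in Set.Ioc t₀ t₁ ×ˢ Set.Ioc 0 l, A q.1 q.2)
  have h2 : HasDerivAt (fun ε : ℝ => ε ^ 2 * (∫ q in Set.Ioc t₀ t₁ ×ˢ Set.Ioc 0 l, B q.1 q.2))
      0 0 := by
    simpa using (hasDerivAt_pow 2 (0:ℝ)).mul_const (∫ q in Set.Ioc t₀ t₁ ×ˢ Set.Ioc 0 l, B q.1 q.2)
  exact (((hasDerivAt_const (0:ℝ) _).add h1).add h2).congr_deriv (by simp)

end Rod

open Rod in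
/-- the planar Cosserat rod configuration is a stationary point of the action
under compactly supported variations iff it satisfies the free rod field equations. -/
theorem free_rod_variational_principle
    (ρ α β K ℓ : ℝ) (hρ : 0 < ρ) (hα : 0 < α) (hβ : 0 < β) (hK : 0 < K) (hℓ : 0 < ℓ)
    (t₀ t₁ : ℝ) (ht : t₀ < t₁)
    (p x y θ : ℝ → ℝ → ℝ)
    (hp : Smooth2 p) (hx : Smooth2 x) (hy : Smooth2 y) (hθ : Smooth2 θ) :
    ((∀ Vx Vy Vθ : ℝ → ℝ → ℝ, Smooth2 Vx → Smooth2 Vy → Smooth2 Vθ →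
        tsupport (fun q : ℝ × ℝ => Vx q.1 q.2) ⊆ Set.Ioo t₀ t₁ ×ˢ Set.Ioo (0 : ℝ) ℓ →
        tsupport (fun q : ℝ × ℝ => Vy q.1 q.2) ⊆ Set.Ioo t₀ t₁ ×ˢ Set.Ioo (0 : ℝ) ℓ →
        tsupport (fun q : ℝ × ℝ => Vθ q.1 q.2) ⊆ Set.Ioo t₀ t₁ ×ˢ Set.Ioo (0 : ℝ) ℓ →
        HasDerivAt (fun ε : ℝ =>
          ∫ t in t₀..t₁, ∫ s in (0 : ℝ)..ℓ,
            rodLag ρ α β K p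
              (fun t' s' => x t' s' + ε * Vx t' s')
              (fun t' s' => y t' s' + ε * Vy t' s')
              (fun t' s' => θ t' s' + ε * Vθ t' s') t s) 0 0)
      ↔ (∀ t ∈ Set.Ioo t₀ t₁, ∀ s ∈ Set.Ioo (0 : ℝ) ℓ,
          ρ * pt (pt x) t s + K * ps (ps (ps (ps x))) t s
            = ps (fun t' s' => p t' s' * ps x t' s') t s ∧
          ρ * pt (pt y) t s + K * ps (ps (ps (ps y))) t s
            = ps (fun t' s' => p t' s' * ps y t' s') t s ∧
          α * pt (pt θ) t s - β * ps (ps θ) t s = 0)) := by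
  have hz : Smooth2 (fun _ _ => (0:ℝ)) := contDiff_const
  have hzsupp : tsupport (fun q : ℝ × ℝ => (fun _ _ => (0:ℝ)) q.1 q.2)
      ⊆ Set.Ioo t₀ t₁ ×ˢ Set.Ioo (0 : ℝ) ℓ := by
    have : tsupport (fun _ : ℝ × ℝ => (0:ℝ)) = ∅ := by
      simp [tsupport]
    rw [show (fun q : ℝ × ℝ => (fun _ _ => (0:ℝ)) q.1 q.2) = fun _ : ℝ × ℝ => (0:ℝ) from rfl,
      this]
    exact Set.empty_subset _
  constructor
  · intro H t htm s hsm
    have hts : ((t, s) : ℝ × ℝ) ∈ Set.Ioo t₀ t₁ ×ˢ Set.Ioo (0:ℝ) ℓ := ⟨htm, hsm⟩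
    refine ⟨?_, ?_, ?_⟩
    · -- x equation
      have hE : Continuous (fun q : ℝ × ℝ => ρ * pt (pt x) q.1 q.2
          + K * ps (ps (ps (ps x))) q.1 q.2
          - ps (fun t' s' => p t' s' * ps x t' s') q.1 q.2) := by
        have c1 := cont2 (smooth2_pt (smooth2_pt hx))
        have c2 := cont2 (smooth2_ps (smooth2_ps (smooth2_ps (smooth2_ps hx))))
        have c3 := cont2 (smooth2_ps (smooth2_mul hp (smooth2_ps hx)))
        fun_prop
      have h0 := flcv ht hℓ hE hts ?_
      · have := h0
        simp only at this
        linarith [this]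
      · intro φ hφ hsupp
        set Vx : ℝ → ℝ → ℝ := fun t s => φ (t, s) with hVxdef
        have hVx : Smooth2 Vx := by
          show ContDiff ℝ (⊤:ℕ∞) fun q : ℝ × ℝ => φ (q.1, q.2)
          simpa using hφ
        have hsup' : tsupport (fun q : ℝ × ℝ => Vx q.1 q.2)
            ⊆ Set.Ioo t₀ t₁ ×ˢ Set.Ioo (0:ℝ) ℓ := by
          simpa [hVxdef] using hsupp
        have hd := key ρ α β K ht.le hℓ.le p x y θ Vx (fun _ _ => 0) (fun _ _ => 0)
          hp hx hy hθ hVx hz hz hsup' hzsupp hzsupp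
        have hd0 := H Vx (fun _ _ => 0) (fun _ _ => 0) hVx hz hz hsup' hzsupp hzsupp
        have huniq := hd.unique hd0
        have heq : (∫ q in Set.Ioc t₀ t₁ ×ˢ Set.Ioc 0 ℓ,
            ((ρ * pt (pt x) q.1 q.2 + K * ps (ps (ps (ps x))) q.1 q.2
                - ps (fun t' s' => p t' s' * ps x t' s') q.1 q.2) * Vx q.1 q.2
              + (ρ * pt (pt y) q.1 q.2 + K * ps (ps (ps (ps y))) q.1 q.2
                - ps (fun t' s' => p t' s' * ps y t' s') q.1 q.2)
                  * (fun _ _ => (0:ℝ)) q.1 q.2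
              + (α * pt (pt θ) q.1 q.2 - β * ps (ps θ) q.1 q.2)
                  * (fun _ _ => (0:ℝ)) q.1 q.2))
            = ∫ z in Set.Ioc t₀ t₁ ×ˢ Set.Ioc 0 ℓ,
              (ρ * pt (pt x) z.1 z.2 + K * ps (ps (ps (ps x))) z.1 z.2
                - ps (fun t' s' => p t' s' * ps x t' s') z.1 z.2) * φ z :=
          integral_congr_ae (Filter.Eventually.of_forall fun z => by simp [hVxdef])
        rw [heq] at huniq
        linarith [huniq]
    · -- y equation
      have hE : Continuous (fun q : ℝ × ℝ => ρ * pt (pt y) q.1 q.2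
          + K * ps (ps (ps (ps y))) q.1 q.2
          - ps (fun t' s' => p t' s' * ps y t' s') q.1 q.2) := by
        have c1 := cont2 (smooth2_pt (smooth2_pt hy))
        have c2 := cont2 (smooth2_ps (smooth2_ps (smooth2_ps (smooth2_ps hy))))
        have c3 := cont2 (smooth2_ps (smooth2_mul hp (smooth2_ps hy)))
        fun_prop
      have h0 := flcv ht hℓ hE hts ?_
      · have := h0
        simp only at this
        linarith [this]
      · intro φ hφ hsupp
        set Vy : ℝ → ℝ → ℝ := fun t s => φ (t, s) with hVydef
        have hVy : Smooth2 Vy := by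
          show ContDiff ℝ (⊤:ℕ∞) fun q : ℝ × ℝ => φ (q.1, q.2)
          simpa using hφ
        have hsup' : tsupport (fun q : ℝ × ℝ => Vy q.1 q.2)
            ⊆ Set.Ioo t₀ t₁ ×ˢ Set.Ioo (0:ℝ) ℓ := by
          simpa [hVydef] using hsupp
        have hd := key ρ α β K ht.le hℓ.le p x y θ (fun _ _ => 0) Vy (fun _ _ => 0)
          hp hx hy hθ hz hVy hz hzsupp hsup' hzsupp
        have hd0 := H (fun _ _ => 0) Vy (fun _ _ => 0) hz hVy hz hzsupp hsup' hzsupp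
        have huniq := hd.unique hd0
        have heq : (∫ q in Set.Ioc t₀ t₁ ×ˢ Set.Ioc 0 ℓ,
            ((ρ * pt (pt x) q.1 q.2 + K * ps (ps (ps (ps x))) q.1 q.2
                - ps (fun t' s' => p t' s' * ps x t' s') q.1 q.2)
                  * (fun _ _ => (0:ℝ)) q.1 q.2
              + (ρ * pt (pt y) q.1 q.2 + K * ps (ps (ps (ps y))) q.1 q.2
                - ps (fun t' s' => p t' s' * ps y t' s') q.1 q.2) * Vy q.1 q.2
              + (α * pt (pt θ) q.1 q.2 - β * ps (ps θ) q.1 q.2)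
                  * (fun _ _ => (0:ℝ)) q.1 q.2))
            = ∫ z in Set.Ioc t₀ t₁ ×ˢ Set.Ioc 0 ℓ,
              (ρ * pt (pt y) z.1 z.2 + K * ps (ps (ps (ps y))) z.1 z.2
                - ps (fun t' s' => p t' s' * ps y t' s') z.1 z.2) * φ z :=
          integral_congr_ae (Filter.Eventually.of_forall fun z => by simp [hVydef])
        rw [heq] at huniq
        linarith [huniq]
    · -- θ equation
      have hE : Continuous (fun q : ℝ × ℝ => α * pt (pt θ) q.1 q.2
          - β * ps (ps θ) q.1 q.2) := by
        have c1 := cont2 (smooth2_pt (smooth2_pt hθ))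
        have c2 := cont2 (smooth2_ps (smooth2_ps hθ))
        fun_prop
      have h0 := flcv ht hℓ hE hts ?_
      · have := h0
        simp only at this
        linarith [this]
      · intro φ hφ hsupp
        set Vθ : ℝ → ℝ → ℝ := fun t s => φ (t, s) with hVθdef
        have hVθ : Smooth2 Vθ := by
          show ContDiff ℝ (⊤:ℕ∞) fun q : ℝ × ℝ => φ (q.1, q.2)
          simpa using hφ
        have hsup' : tsupport (fun q : ℝ × ℝ => Vθ q.1 q.2)
            ⊆ Set.Ioo t₀ t₁ ×ˢ Set.Ioo (0:ℝ) ℓ := by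
          simpa [hVθdef] using hsupp
        have hd := key ρ α β K ht.le hℓ.le p x y θ (fun _ _ => 0) (fun _ _ => 0) Vθ
          hp hx hy hθ hz hz hVθ hzsupp hzsupp hsup'
        have hd0 := H (fun _ _ => 0) (fun _ _ => 0) Vθ hz hz hVθ hzsupp hzsupp hsup'
        have huniq := hd.unique hd0
        have heq : (∫ q in Set.Ioc t₀ t₁ ×ˢ Set.Ioc 0 ℓ,
            ((ρ * pt (pt x) q.1 q.2 + K * ps (ps (ps (ps x))) q.1 q.2
                - ps (fun t' s' => p t' s' * ps x t' s') q.1 q.2)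
                  * (fun _ _ => (0:ℝ)) q.1 q.2
              + (ρ * pt (pt y) q.1 q.2 + K * ps (ps (ps (ps y))) q.1 q.2
                - ps (fun t' s' => p t' s' * ps y t' s') q.1 q.2)
                  * (fun _ _ => (0:ℝ)) q.1 q.2
              + (α * pt (pt θ) q.1 q.2 - β * ps (ps θ) q.1 q.2) * Vθ q.1 q.2))
            = ∫ z in Set.Ioc t₀ t₁ ×ˢ Set.Ioc 0 ℓ,
              (α * pt (pt θ) z.1 z.2 - β * ps (ps θ) z.1 z.2) * φ z :=
          integral_congr_ae (Filter.Eventually.of_forall fun z => by simp [hVθdef])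
        rw [heq] at huniq
        linarith [huniq]
  · intro hEL Vx Vy Vθ hVx hVy hVθ sVx sVy sVθ
    have hd := key ρ α β K ht.le hℓ.le p x y θ Vx Vy Vθ hp hx hy hθ hVx hVy hVθ sVx sVy sVθ
    have hzero : (∫ q in Set.Ioc t₀ t₁ ×ˢ Set.Ioc 0 ℓ,
        ((ρ * pt (pt x) q.1 q.2 + K * ps (ps (ps (ps x))) q.1 q.2
            - ps (fun t' s' => p t' s' * ps x t' s') q.1 q.2) * Vx q.1 q.2
          + (ρ * pt (pt y) q.1 q.2 + K * ps (ps (ps (ps y))) q.1 q.2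
            - ps (fun t' s' => p t' s' * ps y t' s') q.1 q.2) * Vy q.1 q.2
          + (α * pt (pt θ) q.1 q.2 - β * ps (ps θ) q.1 q.2) * Vθ q.1 q.2)) = 0 := by
      have hptw : ∀ q : ℝ × ℝ,
          ((ρ * pt (pt x) q.1 q.2 + K * ps (ps (ps (ps x))) q.1 q.2
            - ps (fun t' s' => p t' s' * ps x t' s') q.1 q.2) * Vx q.1 q.2
          + (ρ * pt (pt y) q.1 q.2 + K * ps (ps (ps (ps y))) q.1 q.2
            - ps (fun t' s' => p t' s' * ps y t' s') q.1 q.2) * Vy q.1 q.2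
          + (α * pt (pt θ) q.1 q.2 - β * ps (ps θ) q.1 q.2) * Vθ q.1 q.2) = 0 := by
        intro q
        by_cases hq : q ∈ Set.Ioo t₀ t₁ ×ˢ Set.Ioo (0:ℝ) ℓ
        · obtain ⟨h1, h2, h3⟩ := hEL q.1 hq.1 q.2 hq.2
          rw [h1, h2, h3, sub_self, sub_self, zero_mul, zero_mul, zero_mul]
          ring
        · have hVx0 : Vx q.1 q.2 = 0 := val_zero (by
            rw [Prod.mk.eta]; exact fun hm => hq (sVx hm))
          have hVy0 : Vy q.1 q.2 = 0 := val_zero (by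
            rw [Prod.mk.eta]; exact fun hm => hq (sVy hm))
          have hVθ0 : Vθ q.1 q.2 = 0 := val_zero (by
            rw [Prod.mk.eta]; exact fun hm => hq (sVθ hm))
          rw [hVx0, hVy0, hVθ0]; ring
      calc (∫ q in Set.Ioc t₀ t₁ ×ˢ Set.Ioc 0 ℓ,
            ((ρ * pt (pt x) q.1 q.2 + K * ps (ps (ps (ps x))) q.1 q.2
              - ps (fun t' s' => p t' s' * ps x t' s') q.1 q.2) * Vx q.1 q.2
            + (ρ * pt (pt y) q.1 q.2 + K * ps (ps (ps (ps y))) q.1 q.2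
              - ps (fun t' s' => p t' s' * ps y t' s') q.1 q.2) * Vy q.1 q.2
            + (α * pt (pt θ) q.1 q.2 - β * ps (ps θ) q.1 q.2) * Vθ q.1 q.2))
          = ∫ _q in Set.Ioc t₀ t₁ ×ˢ Set.Ioc 0 ℓ, (0:ℝ) :=
            integral_congr_ae (Filter.Eventually.of_forall fun q => hptw q)
        _ = 0 := by simp
    rw [hzero, neg_zero] at hd
    exact hd
end

section
/- Suppose x, y, θ, p : ℝ × [0,ℓ] → ℝ are smooth and satisfy the free planar Cosserat rod equations ρẍ + Kx⁗ = (p x′)′, ρÿ + Ky⁗ = (p y′)′, αθ̈ − βθ″ = 0, together with the inextensibility constraint (x′)² + (y′)² = 1, on ℝ × [0,ℓ]. Define the total energy E(t) = ∫₀^ℓ [ (ρ/2)(ẋ² + ẏ²) + (α/2)θ̇² + (K/2)((x″)² + (y″)²) + (β/2)(θ′)² ] ds and the flux F(t, s) = (p x′ − K x‴) ẋ + (p y′ − K y‴) ẏ + β θ′ θ̇ + K (x″ ẋ′ + y″ ẏ′). Then for all t₀ < t₁, E(t₁) − E(t₀) = ∫_{t₀}^{t₁} [F(t, ℓ) − F(t,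 0)] dt. In particular, if for all t the free-end boundary conditions p x′ − K x‴ = p y′ − K y‴ = 0 and x″ = y″ = θ′ = 0 hold at s = 0 and s = ℓ, then E is constant. -/
open MeasureTheory

/-- Total energy of the rod at time `t`. -/
noncomputable def Etot (ρ α β K ℓ : ℝ) (x y θ : ℝ → ℝ → ℝ) (t : ℝ) : ℝ :=
  ∫ s in (0 : ℝ)..ℓ, Edens ρ α β K x y θ t s

/-- Energy flux of the free planar Cosserat rod. -/
noncomputable def fluxF (β K : ℝ) (p x y θ : ℝ → ℝ → ℝ) (t s : ℝ) : ℝ :=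
  (p t s * ps x t s - K * ps (ps (ps x)) t s) * pt x t s
    + (p t s * ps y t s - K * ps (ps (ps y)) t s) * pt y t s
    + β * ps θ t s * pt θ t s
    + K * (ps (ps x) t s * ps (pt x) t s + ps (ps y) t s * ps (pt y) t s)

namespace CA

lemma slice_t {f : ℝ → ℝ → ℝ} (hf : Smooth2 f) (s : ℝ) :
    ContDiff ℝ (⊤:ℕ∞) (fun τ => f τ s) := hf.comp (contDiff_id.prodMk contDiff_const)

lemma slice_s {f : ℝ → ℝ → ℝ} (hf : Smooth2 f) (t : ℝ) :
    ContDiff ℝ (⊤:ℕ∞) (fun σ => f t σ) := hf.comp (contDiff_const.prodMk contDiff_id)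

lemma hasDerivAt_pt {f : ℝ → ℝ → ℝ} (hf : Smooth2 f) (t s : ℝ) :
    HasDerivAt (fun τ => f τ s) (pt f t s) t :=
  (((slice_t hf s).differentiable (by simp)) t).hasDerivAt

lemma hasDerivAt_ps {f : ℝ → ℝ → ℝ} (hf : Smooth2 f) (t s : ℝ) :
    HasDerivAt (fun σ => f t σ) (ps f t s) s :=
  (((slice_s hf t).differentiable (by simp)) s).hasDerivAt

lemma pt_eq_fderiv {f : ℝ → ℝ → ℝ} (hf : Smooth2 f) (t s : ℝ) :
    pt f t s = fderiv ℝ (fun q : ℝ×ℝ => f q.1 q.2) (t,s) (1,0) := by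
  have hc : HasDerivAt (fun τ : ℝ => ((τ, s) : ℝ×ℝ)) (1,0) t :=
    (hasDerivAt_id t).prodMk (hasDerivAt_const t s)
  have h1 : HasDerivAt (fun τ => f τ s)
      (fderiv ℝ (fun q : ℝ×ℝ => f q.1 q.2) (t,s) (1,0)) t :=
    by have hd := ((hf.differentiable (by simp) (t,s) : DifferentiableAt ℝ (fun q : ℝ×ℝ => f q.1 q.2) (t,s)).hasFDerivAt).comp_hasDerivAt t hc; exact hd
  exact (hasDerivAt_pt hf t s).unique h1

lemma ps_eq_fderiv {f : ℝ → ℝ → ℝ} (hf : Smooth2 f) (t s : ℝ) :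
    ps f t s = fderiv ℝ (fun q : ℝ×ℝ => f q.1 q.2) (t,s) (0,1) := by
  have hc : HasDerivAt (fun σ : ℝ => ((t, σ) : ℝ×ℝ)) (0,1) s :=
    (hasDerivAt_const s t).prodMk (hasDerivAt_id s)
  have h1 : HasDerivAt (fun σ => f t σ)
      (fderiv ℝ (fun q : ℝ×ℝ => f q.1 q.2) (t,s) (0,1)) s :=
    ((hf.differentiable (by simp) (t,s)).hasFDerivAt).comp_hasDerivAt s hc
  exact (hasDerivAt_ps hf t s).unique h1

lemma sm_pt {f : ℝ → ℝ → ℝ} (hf : Smooth2 f) : Smooth2 (pt f) := by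
  have h2 : ContDiff ℝ (⊤:ℕ∞) (fun q : ℝ×ℝ => fderiv ℝ (fun q : ℝ×ℝ => f q.1 q.2) q ((1:ℝ),(0:ℝ))) :=
    (hf.fderiv_right (by exact_mod_cast le_top)).clm_apply contDiff_const
  have he : (fun q : ℝ×ℝ => pt f q.1 q.2)
      = fun q : ℝ×ℝ => fderiv ℝ (fun q : ℝ×ℝ => f q.1 q.2) q (1,0) :=
    funext fun q => pt_eq_fderiv hf q.1 q.2
  unfold Smooth2
  rw [he]; exact h2

lemma sm_ps {f : ℝ → ℝ → ℝ} (hf : Smooth2 f) : Smooth2 (ps f) := by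
  have h2 : ContDiff ℝ (⊤:ℕ∞) (fun q : ℝ×ℝ => fderiv ℝ (fun q : ℝ×ℝ => f q.1 q.2) q ((0:ℝ),(1:ℝ))) :=
    (hf.fderiv_right (by exact_mod_cast le_top)).clm_apply contDiff_const
  have he : (fun q : ℝ×ℝ => ps f q.1 q.2)
      = fun q : ℝ×ℝ => fderiv ℝ (fun q : ℝ×ℝ => f q.1 q.2) q (0,1) :=
    funext fun q => ps_eq_fderiv hf q.1 q.2
  unfold Smooth2
  rw [he]; exact h2

lemma swap_pt_ps {f : ℝ → ℝ → ℝ} (hf : Smooth2 f) (t s : ℝ) :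
    pt (ps f) t s = ps (pt f) t s := by
  set F : ℝ×ℝ → ℝ := fun q => f q.1 q.2 with hFdef
  have hF : ContDiff ℝ (⊤:ℕ∞) F := hf
  have hF' : ContDiff ℝ (⊤:ℕ∞) (fderiv ℝ F) := hF.fderiv_right (by exact_mod_cast le_top)
  have hF'' := ((hF'.differentiable (by simp)) (t,s)).hasFDerivAt
  have hsymm := second_derivative_symmetric
    (fun y => ((hF.differentiable (by simp)) y).hasFDerivAt) hF'' ((1:ℝ),(0:ℝ)) ((0:ℝ),(1:ℝ))
  -- pt (ps f) t s
  have h1 : pt (ps f) t s = (fderiv ℝ (fderiv ℝ F) (t,s) (1,0)) (0,1) := by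
    have hc : HasDerivAt (fun τ : ℝ => ((τ, s) : ℝ×ℝ)) (1,0) t :=
      (hasDerivAt_id t).prodMk (hasDerivAt_const t s)
    have hd : HasDerivAt (fun τ : ℝ => fderiv ℝ F (τ, s))
        (fderiv ℝ (fderiv ℝ F) (t,s) (1,0)) t :=
      (((hF'.differentiable (by simp)) (t,s)).hasFDerivAt).comp_hasDerivAt t hc
    have hd2 : HasDerivAt (fun τ : ℝ => fderiv ℝ F (τ, s) ((0:ℝ),(1:ℝ)))
        ((fderiv ℝ (fderiv ℝ F) (t,s) (1,0)) (0,1)) t := by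
      have := hd.clm_apply (hasDerivAt_const t ((0:ℝ),(1:ℝ)))
      simpa using this
    have he : (fun τ => ps f τ s) = fun τ : ℝ => fderiv ℝ F (τ, s) (0,1) :=
      funext fun τ => ps_eq_fderiv hf τ s
    show deriv (fun τ => ps f τ s) t = _
    rw [he]; exact hd2.deriv
  have h2 : ps (pt f) t s = (fderiv ℝ (fderiv ℝ F) (t,s) (0,1)) (1,0) := by
    have hc : HasDerivAt (fun σ : ℝ => ((t, σ) : ℝ×ℝ)) (0,1) s :=
      (hasDerivAt_const s t).prodMk (hasDerivAt_id s)
    have hd : HasDerivAt (fun σ : ℝ => fderiv ℝ F (t, σ))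
        (fderiv ℝ (fderiv ℝ F) (t,s) (0,1)) s :=
      (((hF'.differentiable (by simp)) (t,s)).hasFDerivAt).comp_hasDerivAt s hc
    have hd2 : HasDerivAt (fun σ : ℝ => fderiv ℝ F (t, σ) ((1:ℝ),(0:ℝ)))
        ((fderiv ℝ (fderiv ℝ F) (t,s) (0,1)) (1,0)) s := by
      have := hd.clm_apply (hasDerivAt_const s ((1:ℝ),(0:ℝ)))
      simpa using this
    have he : (fun σ => pt f t σ) = fun σ : ℝ => fderiv ℝ F (t, σ) (1,0) :=
      funext fun σ => pt_eq_fderiv hf t σ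
    show deriv (fun σ => pt f t σ) s = _
    rw [he]; exact hd2.deriv
  rw [h1, h2, hsymm]

end CA

namespace CA

lemma smooth_Edens {ρ α β K : ℝ} {x y θ : ℝ → ℝ → ℝ}
    (hx : Smooth2 x) (hy : Smooth2 y) (hθ : Smooth2 θ) :
    Smooth2 (Edens ρ α β K x y θ) := by
  have h1 : ContDiff ℝ (⊤:ℕ∞) (fun q : ℝ×ℝ => pt x q.1 q.2) := sm_pt hx
  have h2 : ContDiff ℝ (⊤:ℕ∞) (fun q : ℝ×ℝ => pt y q.1 q.2) := sm_pt hy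
  have h3 : ContDiff ℝ (⊤:ℕ∞) (fun q : ℝ×ℝ => pt θ q.1 q.2) := sm_pt hθ
  have h4 : ContDiff ℝ (⊤:ℕ∞) (fun q : ℝ×ℝ => ps (ps x) q.1 q.2) := sm_ps (sm_ps hx)
  have h5 : ContDiff ℝ (⊤:ℕ∞) (fun q : ℝ×ℝ => ps (ps y) q.1 q.2) := sm_ps (sm_ps hy)
  have h6 : ContDiff ℝ (⊤:ℕ∞) (fun q : ℝ×ℝ => ps θ q.1 q.2) := sm_ps hθ
  unfold Smooth2 Edens
  exact ((((contDiff_const.mul ((h1.pow 2).add (h2.pow 2))).add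
    (contDiff_const.mul (h3.pow 2))).add
    (contDiff_const.mul ((h4.pow 2).add (h5.pow 2)))).add
    (contDiff_const.mul (h6.pow 2)))

lemma smooth_fluxF {β K : ℝ} {p x y θ : ℝ → ℝ → ℝ}
    (hp : Smooth2 p) (hx : Smooth2 x) (hy : Smooth2 y) (hθ : Smooth2 θ) :
    Smooth2 (fluxF β K p x y θ) := by
  have h0 : ContDiff ℝ (⊤:ℕ∞) (fun q : ℝ×ℝ => p q.1 q.2) := hp
  have h1 : ContDiff ℝ (⊤:ℕ∞) (fun q : ℝ×ℝ => ps x q.1 q.2) := sm_ps hx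
  have h1' : ContDiff ℝ (⊤:ℕ∞) (fun q : ℝ×ℝ => ps y q.1 q.2) := sm_ps hy
  have h2 : ContDiff ℝ (⊤:ℕ∞) (fun q : ℝ×ℝ => ps (ps (ps x)) q.1 q.2) := sm_ps (sm_ps (sm_ps hx))
  have h2' : ContDiff ℝ (⊤:ℕ∞) (fun q : ℝ×ℝ => ps (ps (ps y)) q.1 q.2) := sm_ps (sm_ps (sm_ps hy))
  have h3 : ContDiff ℝ (⊤:ℕ∞) (fun q : ℝ×ℝ => pt x q.1 q.2) := sm_pt hx
  have h3' : ContDiff ℝ (⊤:ℕ∞) (fun q : ℝ×ℝ => pt y q.1 q.2) := sm_pt hy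
  have h4 : ContDiff ℝ (⊤:ℕ∞) (fun q : ℝ×ℝ => ps θ q.1 q.2) := sm_ps hθ
  have h5 : ContDiff ℝ (⊤:ℕ∞) (fun q : ℝ×ℝ => pt θ q.1 q.2) := sm_pt hθ
  have h6 : ContDiff ℝ (⊤:ℕ∞) (fun q : ℝ×ℝ => ps (ps x) q.1 q.2) := sm_ps (sm_ps hx)
  have h6' : ContDiff ℝ (⊤:ℕ∞) (fun q : ℝ×ℝ => ps (ps y) q.1 q.2) := sm_ps (sm_ps hy)
  have h7 : ContDiff ℝ (⊤:ℕ∞) (fun q : ℝ×ℝ => ps (pt x) q.1 q.2) := sm_ps (sm_pt hx)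
  have h7' : ContDiff ℝ (⊤:ℕ∞) (fun q : ℝ×ℝ => ps (pt y) q.1 q.2) := sm_ps (sm_pt hy)
  unfold Smooth2 fluxF
  exact (((((h0.mul h1).sub (contDiff_const.mul h2)).mul h3).add
    ((((h0.mul h1').sub (contDiff_const.mul h2')).mul h3'))).add
    (((contDiff_const.mul h4).mul h5))).add
    (contDiff_const.mul ((h6.mul h7).add (h6'.mul h7')))

end CA

namespace CA

lemma key {ρ α β K ℓ : ℝ} {x y θ p : ℝ → ℝ → ℝ}
    (hx : Smooth2 x) (hy : Smooth2 y) (hθ : Smooth2 θ) (hp : Smooth2 p)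
    (heqx : ∀ t : ℝ, ∀ s ∈ Set.Icc (0 : ℝ) ℓ,
      ρ * pt (pt x) t s + K * ps (ps (ps (ps x))) t s
        = ps (fun t' s' => p t' s' * ps x t' s') t s)
    (heqy : ∀ t : ℝ, ∀ s ∈ Set.Icc (0 : ℝ) ℓ,
      ρ * pt (pt y) t s + K * ps (ps (ps (ps y))) t s
        = ps (fun t' s' => p t' s' * ps y t' s') t s)
    (heqθ : ∀ t : ℝ, ∀ s ∈ Set.Icc (0 : ℝ) ℓ,
      α * pt (pt θ) t s - β * ps (ps θ) t s = 0)
    (hinext : ∀ t : ℝ, ∀ s ∈ Set.Icc (0 : ℝ) ℓ, (ps x t s) ^ 2 + (ps y t s) ^ 2 = 1)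
    (t : ℝ) (s : ℝ) (hs : s ∈ Set.Icc (0 : ℝ) ℓ) :
    pt (Edens ρ α β K x y θ) t s = ps (fluxF β K p x y θ) t s := by
  -- time-derivative of the energy density
  have HE : HasDerivAt (fun τ => Edens ρ α β K x y θ τ s)
      (ρ * (pt x t s * pt (pt x) t s + pt y t s * pt (pt y) t s)
        + α * (pt θ t s * pt (pt θ) t s)
        + K * (ps (ps x) t s * pt (ps (ps x)) t s + ps (ps y) t s * pt (ps (ps y)) t s)
        + β * (ps θ t s * pt (ps θ) t s)) t := by
    have h := (((HasDerivAt.const_mul (ρ/2)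
        (((hasDerivAt_pt (sm_pt hx) t s).pow 2).add ((hasDerivAt_pt (sm_pt hy) t s).pow 2))).add
      (HasDerivAt.const_mul (α/2) ((hasDerivAt_pt (sm_pt hθ) t s).pow 2))).add
      (HasDerivAt.const_mul (K/2)
        (((hasDerivAt_pt (sm_ps (sm_ps hx)) t s).pow 2).add
          ((hasDerivAt_pt (sm_ps (sm_ps hy)) t s).pow 2)))).add
      (HasDerivAt.const_mul (β/2) ((hasDerivAt_pt (sm_ps hθ) t s).pow 2))
    exact h.congr_deriv (by push_cast; ring)
  have e1 : pt (Edens ρ α β K x y θ) t s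
      = ρ * (pt x t s * pt (pt x) t s + pt y t s * pt (pt y) t s)
        + α * (pt θ t s * pt (pt θ) t s)
        + K * (ps (ps x) t s * pt (ps (ps x)) t s + ps (ps y) t s * pt (ps (ps y)) t s)
        + β * (ps θ t s * pt (ps θ) t s) := HE.deriv
  -- s-derivative of the flux
  have hp1 : HasDerivAt (fun σ => p t σ) (ps p t s) s := hasDerivAt_ps hp t s
  have hx1 : HasDerivAt (fun σ => ps x t σ) (ps (ps x) t s) s := hasDerivAt_ps (sm_ps hx) t s
  have hy1 : HasDerivAt (fun σ => ps y t σ) (ps (ps y) t s) s := hasDerivAt_ps (sm_ps hy) t s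
  have hx3 : HasDerivAt (fun σ => ps (ps (ps x)) t σ) (ps (ps (ps (ps x))) t s) s :=
    hasDerivAt_ps (sm_ps (sm_ps (sm_ps hx))) t s
  have hy3 : HasDerivAt (fun σ => ps (ps (ps y)) t σ) (ps (ps (ps (ps y))) t s) s :=
    hasDerivAt_ps (sm_ps (sm_ps (sm_ps hy))) t s
  have hxt : HasDerivAt (fun σ => pt x t σ) (ps (pt x) t s) s := hasDerivAt_ps (sm_pt hx) t s
  have hyt : HasDerivAt (fun σ => pt y t σ) (ps (pt y) t s) s := hasDerivAt_ps (sm_pt hy) t s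
  have hθ1 : HasDerivAt (fun σ => ps θ t σ) (ps (ps θ) t s) s := hasDerivAt_ps (sm_ps hθ) t s
  have hθt : HasDerivAt (fun σ => pt θ t σ) (ps (pt θ) t s) s := hasDerivAt_ps (sm_pt hθ) t s
  have hx2 : HasDerivAt (fun σ => ps (ps x) t σ) (ps (ps (ps x)) t s) s :=
    hasDerivAt_ps (sm_ps (sm_ps hx)) t s
  have hy2 : HasDerivAt (fun σ => ps (ps y) t σ) (ps (ps (ps y)) t s) s :=
    hasDerivAt_ps (sm_ps (sm_ps hy)) t s
  have hxpt : HasDerivAt (fun σ => ps (pt x) t σ) (ps (ps (pt x)) t s) s :=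
    hasDerivAt_ps (sm_ps (sm_pt hx)) t s
  have hypt : HasDerivAt (fun σ => ps (pt y) t σ) (ps (ps (pt y)) t s) s :=
    hasDerivAt_ps (sm_ps (sm_pt hy)) t s
  have HF : HasDerivAt (fun σ => fluxF β K p x y θ t σ)
      ((ps p t s * ps x t s + p t s * ps (ps x) t s - K * ps (ps (ps (ps x))) t s) * pt x t s
        + (p t s * ps x t s - K * ps (ps (ps x)) t s) * ps (pt x) t s
        + (ps p t s * ps y t s + p t s * ps (ps y) t s - K * ps (ps (ps (ps y))) t s) * pt y t s
        + (p t s * ps y t s - K * ps (ps (ps y)) t s) * ps (pt y) t s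
        + β * ps (ps θ) t s * pt θ t s + β * ps θ t s * ps (pt θ) t s
        + K * (ps (ps (ps x)) t s * ps (pt x) t s + ps (ps x) t s * ps (ps (pt x)) t s
            + ps (ps (ps y)) t s * ps (pt y) t s + ps (ps y) t s * ps (ps (pt y)) t s)) s := by
    have h := (((((hp1.mul hx1).sub (hx3.const_mul K)).mul hxt).add
        ((((hp1.mul hy1).sub (hy3.const_mul K)).mul hyt))).add
        (((hθ1.const_mul β).mul hθt))).add
        ((((hx2.mul hxpt).add (hy2.mul hypt)).const_mul K))
    exact h.congr_deriv (by simp only [Pi.mul_apply, Pi.sub_apply]; ring)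
  have e2 : ps (fluxF β K p x y θ) t s
      = (ps p t s * ps x t s + p t s * ps (ps x) t s - K * ps (ps (ps (ps x))) t s) * pt x t s
        + (p t s * ps x t s - K * ps (ps (ps x)) t s) * ps (pt x) t s
        + (ps p t s * ps y t s + p t s * ps (ps y) t s - K * ps (ps (ps (ps y))) t s) * pt y t s
        + (p t s * ps y t s - K * ps (ps (ps y)) t s) * ps (pt y) t s
        + β * ps (ps θ) t s * pt θ t s + β * ps θ t s * ps (pt θ) t s
        + K * (ps (ps (ps x)) t s * ps (pt x) t s + ps (ps x) t s * ps (ps (pt x)) t s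
            + ps (ps (ps y)) t s * ps (pt y) t s + ps (ps y) t s * ps (ps (pt y)) t s) := HF.deriv
  -- expand the PDE right-hand sides
  have px' : ps (fun t' s' => p t' s' * ps x t' s') t s
      = ps p t s * ps x t s + p t s * ps (ps x) t s := (hp1.mul hx1).deriv
  have py' : ps (fun t' s' => p t' s' * ps y t' s') t s
      = ps p t s * ps y t s + p t s * ps (ps y) t s := (hp1.mul hy1).deriv
  have hxe : ρ * pt (pt x) t s + K * ps (ps (ps (ps x))) t s
      = ps p t s * ps x t s + p t s * ps (ps x) t s := by rw [← px']; exact heqx t s hs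
  have hye : ρ * pt (pt y) t s + K * ps (ps (ps (ps y))) t s
      = ps p t s * ps y t s + p t s * ps (ps y) t s := by rw [← py']; exact heqy t s hs
  have hθe := heqθ t s hs
  -- differentiated inextensibility
  have hcon0 : HasDerivAt (fun τ => (ps x τ s)^2 + (ps y τ s)^2) 0 t := by
    have hfun : (fun τ : ℝ => (ps x τ s)^2 + (ps y τ s)^2) = fun _ => (1:ℝ) :=
      funext fun τ => hinext τ s hs
    rw [hfun]; exact hasDerivAt_const t 1
  have hein : ps x t s * pt (ps x) t s + ps y t s * pt (ps y) t s = 0 := by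
    have h := (((hasDerivAt_pt (sm_ps hx) t s).pow 2).add
      ((hasDerivAt_pt (sm_ps hy) t s).pow 2)).unique hcon0
    push_cast at h
    simp only [pow_one] at h
    linarith
  -- symmetry of mixed partials
  have sx : pt (ps x) t s = ps (pt x) t s := swap_pt_ps hx t s
  have sy : pt (ps y) t s = ps (pt y) t s := swap_pt_ps hy t s
  have sθ : pt (ps θ) t s = ps (pt θ) t s := swap_pt_ps hθ t s
  have hfx : pt (ps x) = ps (pt x) := funext fun a => funext fun b => swap_pt_ps hx a b
  have hfy : pt (ps y) = ps (pt y) := funext fun a => funext fun b => swap_pt_ps hy a b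
  have sxx : pt (ps (ps x)) t s = ps (ps (pt x)) t s := by
    rw [swap_pt_ps (sm_ps hx) t s, hfx]
  have syy : pt (ps (ps y)) t s = ps (ps (pt y)) t s := by
    rw [swap_pt_ps (sm_ps hy) t s, hfy]
  rw [sx, sy] at hein
  rw [e1, e2, sxx, syy, sθ]
  linear_combination (pt x t s) * hxe + (pt y t s) * hye + (pt θ t s) * hθe - (p t s) * hein

end CA


set_option maxHeartbeats 4000000 in
/-- integral energy balance for the free planar Cosserat rod, and energy
conservation under free-end boundary conditions. -/
theorem energy_balance_free_rod
    (ρ α β K ℓ : ℝ) (hρ : 0 < ρ) (hα : 0 < α) (hβ : 0 < β) (hK : 0 < K) (hℓ : 0 < ℓ)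
    (x y θ p : ℝ → ℝ → ℝ)
    (hx : Smooth2 x) (hy : Smooth2 y) (hθ : Smooth2 θ) (hp : Smooth2 p)
    (heqx : ∀ t : ℝ, ∀ s ∈ Set.Icc (0 : ℝ) ℓ,
      ρ * pt (pt x) t s + K * ps (ps (ps (ps x))) t s
        = ps (fun t' s' => p t' s' * ps x t' s') t s)
    (heqy : ∀ t : ℝ, ∀ s ∈ Set.Icc (0 : ℝ) ℓ,
      ρ * pt (pt y) t s + K * ps (ps (ps (ps y))) t s
        = ps (fun t' s' => p t' s' * ps y t' s') t s)
    (heqθ : ∀ t : ℝ, ∀ s ∈ Set.Icc (0 : ℝ) ℓ,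
      α * pt (pt θ) t s - β * ps (ps θ) t s = 0)
    (hinext : ∀ t : ℝ, ∀ s ∈ Set.Icc (0 : ℝ) ℓ, (ps x t s) ^ 2 + (ps y t s) ^ 2 = 1) :
    (∀ t₀ t₁ : ℝ, t₀ < t₁ →
      Etot ρ α β K ℓ x y θ t₁ - Etot ρ α β K ℓ x y θ t₀
        = ∫ t in t₀..t₁, (fluxF β K p x y θ t ℓ - fluxF β K p x y θ t 0)) ∧
    ((∀ t : ℝ, ∀ s : ℝ, s = 0 ∨ s = ℓ →
        p t s * ps x t s - K * ps (ps (ps x)) t s = 0 ∧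
        p t s * ps y t s - K * ps (ps (ps y)) t s = 0 ∧
        ps (ps x) t s = 0 ∧ ps (ps y) t s = 0 ∧ ps θ t s = 0) →
      ∀ t₁ t₂ : ℝ, Etot ρ α β K ℓ x y θ t₁ = Etot ρ α β K ℓ x y θ t₂) := by
  have hE : Smooth2 (Edens ρ α β K x y θ) := CA.smooth_Edens hx hy hθ
  have hF : Smooth2 (fluxF β K p x y θ) := CA.smooth_fluxF hp hx hy hθ
  have hEc : Continuous (fun q : ℝ×ℝ => pt (Edens ρ α β K x y θ) q.1 q.2) :=
    (CA.sm_pt hE).continuous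
  have main : ∀ t₀ t₁ : ℝ, t₀ < t₁ →
      Etot ρ α β K ℓ x y θ t₁ - Etot ρ α β K ℓ x y θ t₀
        = ∫ t in t₀..t₁, (fluxF β K p x y θ t ℓ - fluxF β K p x y θ t 0) := by
    intro t₀ t₁ h01
    have stepa : ∀ s : ℝ, Edens ρ α β K x y θ t₁ s - Edens ρ α β K x y θ t₀ s
        = ∫ t in t₀..t₁, pt (Edens ρ α β K x y θ) t s := by
      intro s
      rw [intervalIntegral.integral_eq_sub_of_hasDerivAt
        (fun t _ => CA.hasDerivAt_pt hE t s)
        (((CA.slice_t (CA.sm_pt hE) s).continuous).intervalIntegrable t₀ t₁)]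
    have stepb : Etot ρ α β K ℓ x y θ t₁ - Etot ρ α β K ℓ x y θ t₀
        = ∫ s in (0:ℝ)..ℓ, (Edens ρ α β K x y θ t₁ s - Edens ρ α β K x y θ t₀ s) := by
      unfold Etot
      rw [intervalIntegral.integral_sub
        (((CA.slice_s hE t₁).continuous).intervalIntegrable 0 ℓ)
        (((CA.slice_s hE t₀).continuous).intervalIntegrable 0 ℓ)]
    have hInt : Integrable (Function.uncurry fun s t => pt (Edens ρ α β K x y θ) t s)
        ((volume.restrict (Set.Ioc (0:ℝ) ℓ)).prod (volume.restrict (Set.Ioc t₀ t₁))) := by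
      rw [Measure.prod_restrict, ← MeasureTheory.Measure.volume_eq_prod]
      have hc : Continuous (Function.uncurry fun s t => pt (Edens ρ α β K x y θ) t s) :=
        hEc.comp continuous_swap
      exact ((hc.continuousOn).integrableOn_compact
        (isCompact_Icc.prod isCompact_Icc)).mono_set
        (Set.prod_mono Set.Ioc_subset_Icc_self Set.Ioc_subset_Icc_self)
    have stepd : ∫ s in (0:ℝ)..ℓ, ∫ t in t₀..t₁, pt (Edens ρ α β K x y θ) t s
        = ∫ t in t₀..t₁, ∫ s in (0:ℝ)..ℓ, pt (Edens ρ α β K x y θ) t s := by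
      simp only [intervalIntegral.integral_of_le h01.le, intervalIntegral.integral_of_le hℓ.le]
      exact MeasureTheory.integral_integral_swap hInt
    have stepe : ∀ t : ℝ, ∫ s in (0:ℝ)..ℓ, pt (Edens ρ α β K x y θ) t s
        = fluxF β K p x y θ t ℓ - fluxF β K p x y θ t 0 := by
      intro t
      have hcongr : ∫ s in (0:ℝ)..ℓ, pt (Edens ρ α β K x y θ) t s
          = ∫ s in (0:ℝ)..ℓ, ps (fluxF β K p x y θ) t s := by
        apply intervalIntegral.integral_congr
        intro s hsm
        rw [Set.uIcc_of_le hℓ.le] at hsm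
        exact CA.key hx hy hθ hp heqx heqy heqθ hinext t s hsm
      rw [hcongr]
      exact intervalIntegral.integral_eq_sub_of_hasDerivAt
        (fun s _ => CA.hasDerivAt_ps hF t s)
        (((CA.slice_s (CA.sm_ps hF) t).continuous).intervalIntegrable 0 ℓ)
    rw [stepb]
    simp only [stepa]
    rw [stepd]
    exact intervalIntegral.integral_congr (fun t _ => stepe t)
  refine ⟨main, ?_⟩
  intro hbc t₁ t₂
  have hzero : ∀ t : ℝ, fluxF β K p x y θ t ℓ - fluxF β K p x y θ t 0 = 0 := by
    intro t
    obtain ⟨h1, h2, h3, h4, h5⟩ := hbc t ℓ (Or.inr rfl)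
    obtain ⟨g1, g2, g3, g4, g5⟩ := hbc t 0 (Or.inl rfl)
    unfold fluxF
    rw [h1, h2, h3, h4, h5, g1, g2, g3, g4, g5]
    ring
  have mono : ∀ a b : ℝ, a < b → Etot ρ α β K ℓ x y θ b = Etot ρ α β K ℓ x y θ a := by
    intro a b hab
    have h := main a b hab
    simp only [hzero, intervalIntegral.integral_zero] at h
    linarith
  rcases lt_trichotomy t₁ t₂ with h | h | h
  · exact (mono t₁ t₂ h).symm
  · rw [h]
  · exact mono t₂ t₁ h
end

section
/- Suppose x, y, θ, p : ℝ × [0,ℓ] → ℝ are smooth and satisfy the free planar Cosserat rod equations ρẍ + Kx⁗ = (p x′)′, ρÿ + Ky⁗ = (p y′)′, αθ̈ − βθ″ = 0, together with the inextensibility constraint (x′)² + (y′)² = 1, on ℝ × [0,ℓ], and suppose that for all t ∈ ℝ the boundary conditions p x′ − K x‴ = 0, p y′ − K y‴ = 0, and x″ = y″ = 0 hold at s = 0 and s = ℓ. Then the total angular momentum ∫₀^ℓ ρ (x ẏ − y ẋ)(t, s) ds is constant in t. -/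
open MeasureTheory

namespace Smooth2

variable {f g : ℝ → ℝ → ℝ}

lemma hasDerivAt_t (hf : Smooth2 f) (t s : ℝ) :
    HasDerivAt (fun τ => f τ s) (fderiv ℝ (fun q : ℝ × ℝ => f q.1 q.2) (t, s) (1, 0)) t := by
  have hline : HasDerivAt (fun τ : ℝ => ((τ, s) : ℝ × ℝ)) ((1 : ℝ), (0 : ℝ)) t :=
    (hasDerivAt_id t).prodMk (hasDerivAt_const t s)
  exact ((hf.differentiable (by simp) (t, s)).hasFDerivAt).comp_hasDerivAt t hline

lemma hasDerivAt_s (hf : Smooth2 f) (t s : ℝ) :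
    HasDerivAt (fun σ => f t σ) (fderiv ℝ (fun q : ℝ × ℝ => f q.1 q.2) (t, s) (0, 1)) s := by
  have hline : HasDerivAt (fun σ : ℝ => ((t, σ) : ℝ × ℝ)) ((0 : ℝ), (1 : ℝ)) s :=
    (hasDerivAt_const s t).prodMk (hasDerivAt_id s)
  exact ((hf.differentiable (by simp) (t, s)).hasFDerivAt).comp_hasDerivAt s hline

lemma pt_eq (hf : Smooth2 f) (t s : ℝ) :
    pt f t s = fderiv ℝ (fun q : ℝ × ℝ => f q.1 q.2) (t, s) (1, 0) :=
  (hf.hasDerivAt_t t s).deriv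

lemma ps_eq (hf : Smooth2 f) (t s : ℝ) :
    ps f t s = fderiv ℝ (fun q : ℝ × ℝ => f q.1 q.2) (t, s) (0, 1) :=
  (hf.hasDerivAt_s t s).deriv

lemma hasDerivAt_pt (hf : Smooth2 f) (t s : ℝ) :
    HasDerivAt (fun τ => f τ s) (pt f t s) t := by
  rw [hf.pt_eq]; exact hf.hasDerivAt_t t s

lemma hasDerivAt_ps (hf : Smooth2 f) (t s : ℝ) :
    HasDerivAt (fun σ => f t σ) (ps f t s) s := by
  rw [hf.ps_eq]; exact hf.hasDerivAt_s t s

lemma pt_smooth (hf : Smooth2 f) : Smooth2 (pt f) := by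
  have h1 : ContDiff ℝ (⊤ : ℕ∞)
      (fun q : ℝ × ℝ => fderiv ℝ (fun p : ℝ × ℝ => f p.1 p.2) q ((1 : ℝ), (0 : ℝ))) :=
    (hf.fderiv_right (by simp)).clm_apply contDiff_const
  have h2 : (fun q : ℝ × ℝ => pt f q.1 q.2)
      = fun q : ℝ × ℝ => fderiv ℝ (fun p : ℝ × ℝ => f p.1 p.2) q ((1 : ℝ), (0 : ℝ)) :=
    funext fun q => hf.pt_eq q.1 q.2
  rw [Smooth2, h2]; exact h1

lemma ps_smooth (hf : Smooth2 f) : Smooth2 (ps f) := by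
  have h1 : ContDiff ℝ (⊤ : ℕ∞)
      (fun q : ℝ × ℝ => fderiv ℝ (fun p : ℝ × ℝ => f p.1 p.2) q ((0 : ℝ), (1 : ℝ))) :=
    (hf.fderiv_right (by simp)).clm_apply contDiff_const
  have h2 : (fun q : ℝ × ℝ => ps f q.1 q.2)
      = fun q : ℝ × ℝ => fderiv ℝ (fun p : ℝ × ℝ => f p.1 p.2) q ((0 : ℝ), (1 : ℝ)) :=
    funext fun q => hf.ps_eq q.1 q.2
  rw [Smooth2, h2]; exact h1

lemma cont (hf : Smooth2 f) : Continuous (fun q : ℝ × ℝ => f q.1 q.2) :=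
  ContDiff.continuous hf

end Smooth2

/-- Angular momentum density. -/
noncomputable def gA (ρ : ℝ) (x y : ℝ → ℝ → ℝ) : ℝ → ℝ → ℝ :=
  fun t s => ρ * (x t s * pt y t s - y t s * pt x t s)

/-- Time derivative of the angular momentum density. -/
noncomputable def gB (ρ : ℝ) (x y : ℝ → ℝ → ℝ) : ℝ → ℝ → ℝ :=
  fun t s => ρ * (x t s * pt (pt y) t s - y t s * pt (pt x) t s)

/-- Angular momentum flux. -/
noncomputable def FF (K : ℝ) (x y p : ℝ → ℝ → ℝ) : ℝ → ℝ → ℝ := fun t s =>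
  x t s * (p t s * ps y t s - K * ps (ps (ps y)) t s)
    - y t s * (p t s * ps x t s - K * ps (ps (ps x)) t s)
    + K * (ps x t s * ps (ps y) t s - ps y t s * ps (ps x) t s)

variable {ρ K : ℝ} {x y p : ℝ → ℝ → ℝ}

lemma gA_smooth (hx : Smooth2 x) (hy : Smooth2 y) : Smooth2 (gA ρ x y) := by
  unfold gA Smooth2
  exact contDiff_const.mul ((ContDiff.mul hx hy.pt_smooth).sub (ContDiff.mul hy hx.pt_smooth))

lemma gB_smooth (hx : Smooth2 x) (hy : Smooth2 y) : Smooth2 (gB ρ x y) := by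
  unfold gB Smooth2
  exact contDiff_const.mul ((ContDiff.mul hx hy.pt_smooth.pt_smooth).sub
    (ContDiff.mul hy hx.pt_smooth.pt_smooth))

lemma gA_hasDerivAt_t (hx : Smooth2 x) (hy : Smooth2 y) (t s : ℝ) :
    HasDerivAt (fun τ => gA ρ x y τ s) (gB ρ x y t s) t := by
  have h := (((hx.hasDerivAt_pt t s).mul ((hy.pt_smooth).hasDerivAt_pt t s)).sub
    ((hy.hasDerivAt_pt t s).mul ((hx.pt_smooth).hasDerivAt_pt t s))).const_mul ρ
  have hval : gB ρ x y t s
      = ρ * ((pt x t s * pt y t s + x t s * pt (pt y) t s)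
        - (pt y t s * pt x t s + y t s * pt (pt x) t s)) := by
    unfold gB; ring
  rw [hval]
  exact h

lemma FF_hasDerivAt_s (hx : Smooth2 x) (hy : Smooth2 y) (hp : Smooth2 p) (t s : ℝ) :
    HasDerivAt (fun σ => FF K x y p t σ)
      ((ps x t s * (p t s * ps y t s - K * ps (ps (ps y)) t s)
          + x t s * ((ps p t s * ps y t s + p t s * ps (ps y) t s)
              - K * ps (ps (ps (ps y))) t s))
        - (ps y t s * (p t s * ps x t s - K * ps (ps (ps x)) t s)
          + y t s * ((ps p t s * ps x t s + p t s * ps (ps x) t s)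
              - K * ps (ps (ps (ps x))) t s))
        + K * ((ps (ps x) t s * ps (ps y) t s + ps x t s * ps (ps (ps y)) t s)
            - (ps (ps y) t s * ps (ps x) t s + ps y t s * ps (ps (ps x)) t s))) s := by
  have h1 := (hx.hasDerivAt_ps t s).mul
    (((hp.hasDerivAt_ps t s).mul ((hy.ps_smooth).hasDerivAt_ps t s)).sub
      (((hy.ps_smooth.ps_smooth.ps_smooth).hasDerivAt_ps t s).const_mul K))
  have h2 := (hy.hasDerivAt_ps t s).mul
    (((hp.hasDerivAt_ps t s).mul ((hx.ps_smooth).hasDerivAt_ps t s)).sub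
      (((hx.ps_smooth.ps_smooth.ps_smooth).hasDerivAt_ps t s).const_mul K))
  have h3 := (((hx.ps_smooth).hasDerivAt_ps t s).mul
      ((hy.ps_smooth.ps_smooth).hasDerivAt_ps t s)).sub
    (((hy.ps_smooth).hasDerivAt_ps t s).mul
      ((hx.ps_smooth.ps_smooth).hasDerivAt_ps t s))
  exact (h1.sub h2).add (h3.const_mul K)

lemma ps_mul_eq (hp : Smooth2 p) (hx : Smooth2 x) (t s : ℝ) :
    ps (fun t' s' => p t' s' * ps x t' s') t s
      = ps p t s * ps x t s + p t s * ps (ps x) t s :=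
  ((hp.hasDerivAt_ps t s).mul ((hx.ps_smooth).hasDerivAt_ps t s)).deriv

/-- conservation of total angular momentum for the free planar Cosserat rod. -/
theorem angular_momentum_conservation_free_rod
    (ρ α β K ℓ : ℝ) (hρ : 0 < ρ) (hα : 0 < α) (hβ : 0 < β) (hK : 0 < K) (hℓ : 0 < ℓ)
    (x y θ p : ℝ → ℝ → ℝ)
    (hx : Smooth2 x) (hy : Smooth2 y) (hθ : Smooth2 θ) (hp : Smooth2 p)
    (heqx : ∀ t : ℝ, ∀ s ∈ Set.Icc (0 : ℝ) ℓ,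
      ρ * pt (pt x) t s + K * ps (ps (ps (ps x))) t s
        = ps (fun t' s' => p t' s' * ps x t' s') t s)
    (heqy : ∀ t : ℝ, ∀ s ∈ Set.Icc (0 : ℝ) ℓ,
      ρ * pt (pt y) t s + K * ps (ps (ps (ps y))) t s
        = ps (fun t' s' => p t' s' * ps y t' s') t s)
    (heqθ : ∀ t : ℝ, ∀ s ∈ Set.Icc (0 : ℝ) ℓ,
      α * pt (pt θ) t s - β * ps (ps θ) t s = 0)
    (hinext : ∀ t : ℝ, ∀ s ∈ Set.Icc (0 : ℝ) ℓ, (ps x t s) ^ 2 + (ps y t s) ^ 2 = 1)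
    (hbc : ∀ t : ℝ, ∀ s : ℝ, s = 0 ∨ s = ℓ →
      p t s * ps x t s - K * ps (ps (ps x)) t s = 0 ∧
      p t s * ps y t s - K * ps (ps (ps y)) t s = 0 ∧
      ps (ps x) t s = 0 ∧ ps (ps y) t s = 0) :
    ∀ t₁ t₂ : ℝ,
      (∫ s in (0 : ℝ)..ℓ, ρ * (x t₁ s * pt y t₁ s - y t₁ s * pt x t₁ s))
        = ∫ s in (0 : ℝ)..ℓ, ρ * (x t₂ s * pt y t₂ s - y t₂ s * pt x t₂ s) := by
  have hgB := gB_smooth (ρ := ρ) hx hy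
  have hgA := gA_smooth (ρ := ρ) hx hy
  -- the s-derivative of the flux equals gB on the strip
  have hflux : ∀ t : ℝ, ∀ s ∈ Set.Icc (0 : ℝ) ℓ,
      HasDerivAt (fun σ => FF K x y p t σ) (gB ρ x y t s) s := by
    intro t s hs
    have h := FF_hasDerivAt_s (K := K) hx hy hp t s
    have ex := heqx t s hs
    have ey := heqy t s hs
    rw [ps_mul_eq hp hx] at ex
    rw [ps_mul_eq hp hy] at ey
    have hval : gB ρ x y t s
        = (ps x t s * (p t s * ps y t s - K * ps (ps (ps y)) t s)
          + x t s * ((ps p t s * ps y t s + p t s * ps (ps y) t s)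
              - K * ps (ps (ps (ps y))) t s))
        - (ps y t s * (p t s * ps x t s - K * ps (ps (ps x)) t s)
          + y t s * ((ps p t s * ps x t s + p t s * ps (ps x) t s)
              - K * ps (ps (ps (ps x))) t s))
        + K * ((ps (ps x) t s * ps (ps y) t s + ps x t s * ps (ps (ps y)) t s)
            - (ps (ps y) t s * ps (ps x) t s + ps y t s * ps (ps (ps x)) t s)) := by
      unfold gB
      linear_combination (x t s) * ey - (y t s) * ex
    rw [hval]
    exact h
  -- boundary vanishing of the flux
  have hbd : ∀ t : ℝ, ∀ s : ℝ, s = 0 ∨ s = ℓ → FF K x y p t s = 0 := by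
    intro t s hs
    obtain ⟨b1, b2, b3, b4⟩ := hbc t s hs
    unfold FF
    linear_combination (x t s) * b2 - (y t s) * b1 + (K * ps x t s) * b4
      - (K * ps y t s) * b3
  -- the integral of gB over the rod vanishes
  have hint0 : ∀ t : ℝ, (∫ s in (0 : ℝ)..ℓ, gB ρ x y t s) = 0 := by
    intro t
    have hder : ∀ s ∈ Set.uIcc (0 : ℝ) ℓ,
        HasDerivAt (fun σ => FF K x y p t σ) (gB ρ x y t s) s := by
      intro s hs
      rw [Set.uIcc_of_le hℓ.le] at hs
      exact hflux t s hs
    have hII : IntervalIntegrable (fun s => gB ρ x y t s) volume 0 ℓ :=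
      (hgB.cont.comp (Continuous.prodMk_right t)).intervalIntegrable 0 ℓ
    rw [intervalIntegral.integral_eq_sub_of_hasDerivAt hder hII,
      hbd t ℓ (Or.inr rfl), hbd t 0 (Or.inl rfl), sub_zero]
  -- differentiation under the integral sign
  have hG : ∀ t₀ : ℝ, HasDerivAt (fun t => ∫ s in (0 : ℝ)..ℓ, gA ρ x y t s) 0 t₀ := by
    intro t₀
    obtain ⟨C, hC⟩ := IsCompact.exists_bound_of_continuousOn
      ((isCompact_Icc (a := t₀ - 1) (b := t₀ + 1)).prod (isCompact_Icc (a := (0:ℝ)) (b := ℓ)))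
      (hgB.cont.continuousOn)
    have key := intervalIntegral.hasDerivAt_integral_of_dominated_loc_of_deriv_le
      (μ := volume) (F := fun t s => gA ρ x y t s) (F' := fun t s => gB ρ x y t s)
      (x₀ := t₀) (a := 0) (b := ℓ) (s := Metric.ball t₀ 1) (bound := fun _ => C)
      (Metric.ball_mem_nhds t₀ one_pos)
      (Filter.Eventually.of_forall fun t =>
        (hgA.cont.comp (Continuous.prodMk_right t)).aestronglyMeasurable)
      ((hgA.cont.comp (Continuous.prodMk_right t₀)).intervalIntegrable 0 ℓ)
      (hgB.cont.comp (Continuous.prodMk_right t₀)).aestronglyMeasurable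
      (Filter.Eventually.of_forall (fun s hs t ht => by
        have hs' : s ∈ Set.Icc (0:ℝ) ℓ := by
          rw [Set.uIoc_of_le hℓ.le] at hs
          exact ⟨hs.1.le, hs.2⟩
        have ht' : t ∈ Set.Icc (t₀ - 1) (t₀ + 1) := by
          rw [Metric.mem_ball, Real.dist_eq, abs_sub_lt_iff] at ht
          constructor <;> linarith [ht.1, ht.2]
        exact hC ((t, s) : ℝ × ℝ) ⟨ht', hs'⟩))
      (intervalIntegrable_const)
      (Filter.Eventually.of_forall (fun s _ t _ => gA_hasDerivAt_t hx hy t s))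
    have := key.2
    rwa [hint0 t₀] at this
  intro t₁ t₂
  exact is_const_of_deriv_eq_zero (fun t => (hG t).differentiableAt)
    (fun t => (hG t).deriv) t₁ t₂
end
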